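/- arXiv:2112.05645 — 6 statements merged into one kernel-verified Lean document; each statement's English description precedes it below -/
import Mathlib

section
/- Under Assumptions 1 and 3, every block-coordinate subproblem of the dual has a nonempty set of maximizers: for every vertex j ∈ V and every fixed choice of λ_t ∈ ℝ^N (t ∈ V, t ≠ j) and Λ_{t1,t2} ∈ ℝ^{N×N} ((t1,t2) ∈ E), the function λ_j ↦ φ(λ,Λ) attains its supremum over ℝ^N; and for every edge (j1,j2) ∈ E and every fixed choice of the other dual variables, the function Λ_{j1,j2} ↦ φ(λ,Λ) attains its supremum over ℝ^{N×N}. -/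
open scoped BigOperators
open Filter

noncomputable section

abbrev Tens (T N : ℕ) := (Fin T → Fin N) → ℝ

/-- Marginal projection `P_t(M)`. -/
def tproj {T N : ℕ} (t : Fin T) (M : Tens T N) : Fin N → ℝ :=
  fun i => ∑ x : Fin T → Fin N, if x t = i then M x else 0

/-- Bimarginal projection `P_{t₁,t₂}(M)`. -/
def tbiproj {T N : ℕ} (t₁ t₂ : Fin T) (M : Tens T N) : Fin N × Fin N → ℝ :=
  fun p => ∑ x : Fin T → Fin N, if x t₁ = p.1 ∧ x t₂ = p.2 then M x else 0

/-- Entropy `D(M)` (note `Real.log 0 = 0`, so the convention `0 · log 0 = 0` holds). -/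
def entropy {T N : ℕ} (M : Tens T N) : ℝ :=
  ∑ x : Fin T → Fin N, (M x * Real.log (M x) - M x + 1)

/-- A function into `ℝ ∪ {±∞}` is proper if it never takes the value `-∞`
and is not identically `+∞`. -/
def properFn {ι : Type*} (f : (ι → ℝ) → EReal) : Prop :=
  (∀ x, f x ≠ ⊥) ∧ ∃ x, f x ≠ ⊤

/-- Convexity for extended-real-valued functions. -/
def convexFn {ι : Type*} (f : (ι → ℝ) → EReal) : Prop :=
  ∀ x y : ι → ℝ, ∀ a b : ℝ, 0 ≤ a → 0 ≤ b → a + b = 1 →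
    f (a • x + b • y) ≤ ((a : ℝ) : EReal) * f x + ((b : ℝ) : EReal) * f y

/-- Dual variables: `λ_t ∈ ℝ^N` for each vertex and `Λ_{t₁,t₂} ∈ ℝ^{N×N}` for each edge. -/
abbrev DVar (T N : ℕ) (E : Finset (Fin T × Fin T)) :=
  (Fin T → Fin N → ℝ) × ({e : Fin T × Fin T // e ∈ E} → Fin N × Fin N → ℝ)

/-- Fenchel conjugate `f*(y) = sup_x ⟨y,x⟩ - f(x)`. -/
def fconj {ι : Type*} [Fintype ι] (f : (ι → ℝ) → EReal) (y : ι → ℝ) : EReal :=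
  ⨆ x : ι → ℝ, (((∑ i, y i * x i : ℝ)) : EReal) - f x

/-- The tensor `U(λ,Λ)(x) = ∏_t exp(λ_t(x t)/ε) · ∏_{(t₁,t₂)∈E} exp(Λ_{t₁,t₂}(x t₁, x t₂)/ε)`. -/
def Utens {T N : ℕ} (ε : ℝ) {E : Finset (Fin T × Fin T)} (p : DVar T N E)
    (x : Fin T → Fin N) : ℝ :=
  (∏ t : Fin T, Real.exp (p.1 t (x t) / ε)) *
    ∏ e : {e : Fin T × Fin T // e ∈ E}, Real.exp (p.2 e (x e.1.1, x e.1.2) / ε)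

/-- Graph-structured cost tensor with finite (real) cost matrices. -/
def costR {T N : ℕ} (E : Finset (Fin T × Fin T))
    (Cm : Fin T × Fin T → Fin N → Fin N → ℝ) (x : Fin T → Fin N) : ℝ :=
  ∑ e ∈ E, Cm e (x e.1) (x e.2)

/-- The tensor `K(x) = exp(-C(x)/ε)`. -/
def KtensR {T N : ℕ} (ε : ℝ) (E : Finset (Fin T × Fin T))
    (Cm : Fin T × Fin T → Fin N → Fin N → ℝ) (x : Fin T → Fin N) : ℝ :=
  Real.exp (-(costR E Cm x) / ε)

/-- The dual objective `φ(λ,Λ) = -ε⟨K, U(λ,Λ)⟩ - ∑_t (g^{(t)})*(-λ_t)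
- ∑_{(t₁,t₂)∈E} (f^{(t₁,t₂)})*(-Λ_{t₁,t₂})`. -/
def dualObjR {T N : ℕ} (ε : ℝ) (E : Finset (Fin T × Fin T))
    (Cm : Fin T × Fin T → Fin N → Fin N → ℝ)
    (g : Fin T → (Fin N → ℝ) → EReal)
    (f : Fin T × Fin T → (Fin N × Fin N → ℝ) → EReal)
    (p : DVar T N E) : EReal :=
  -((ε * ∑ x : Fin T → Fin N, KtensR ε E Cm x * Utens ε p x : ℝ) : EReal)
    - ∑ t : Fin T, fconj (g t) (fun i => -(p.1 t i))
    - ∑ e : {e : Fin T × Fin T // e ∈ E}, fconj (f e.1) (fun q => -(p.2 e q))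

/-- A polyhedral set: a finite intersection of closed half-spaces. -/
def isPolyhedralSet {V : Type*} [AddCommGroup V] [Module ℝ V] (s : Set V) : Prop :=
  ∃ (k : ℕ) (a : Fin k → V →ₗ[ℝ] ℝ) (b : Fin k → ℝ), s = {x | ∀ i, a i x ≤ b i}

/-- Effective domain of an extended-real-valued function. -/
def edom {ι : Type*} (f : (ι → ℝ) → EReal) : Set (ι → ℝ) := {x | f x ≠ ⊤}

/-- A convex function is polyhedral if its epigraph is a polyhedral set. -/
def isPolyhedralFn {ι : Type*} (f : (ι → ℝ) → EReal) : Prop :=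
  isPolyhedralSet {p : (ι → ℝ) × ℝ | f p.1 ≤ ((p.2 : ℝ) : EReal)}



lemma sq_div_four_le_exp {x : ℝ} (hx : 0 ≤ x) : x ^ 2 / 4 ≤ Real.exp x := by
  have h1 : x / 2 + 1 ≤ Real.exp (x / 2) := Real.add_one_le_exp (x / 2)
  have h2 : Real.exp (x / 2) * Real.exp (x / 2) = Real.exp x := by
    rw [← Real.exp_add]; ring_nf
  nlinarith [Real.exp_pos (x / 2)]

lemma phi_upper (μ d ε : ℝ) (hμ : 0 < μ) (hd : 0 < d) (hε : 0 < ε) :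
    ∀ s : ℝ, μ * s - d * Real.exp (s / ε) ≤ μ ^ 2 * ε ^ 2 / d := by
  intro s
  rcases le_or_gt s 0 with hs | hs
  · have h1 : μ * s ≤ 0 := mul_nonpos_of_nonneg_of_nonpos hμ.le hs
    have h2 : 0 < d * Real.exp (s / ε) := mul_pos hd (Real.exp_pos _)
    have h3 : 0 ≤ μ ^ 2 * ε ^ 2 / d := by positivity
    linarith
  · have hq : (s / ε) ^ 2 / 4 ≤ Real.exp (s / ε) :=
      sq_div_four_le_exp (by positivity)
    have h4 : d * ((s / ε) ^ 2 / 4) ≤ d * Real.exp (s / ε) :=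
      mul_le_mul_of_nonneg_left hq hd.le
    have h5 : (s / ε) ^ 2 = s ^ 2 / ε ^ 2 := by rw [div_pow]
    -- μ s - d s²/(4ε²) ≤ μ² ε²/d  ⟺  0 ≤ (d s/(2ε) - μ ε)²  (after clearing)
    rw [div_pow] at hq
    have key : μ * s - d * (s ^ 2 / ε ^ 2 / 4) ≤ μ ^ 2 * ε ^ 2 / d := by
      have hε2 : 0 < ε ^ 2 := by positivity
      have expand : μ ^ 2 * ε ^ 2 / d - (μ * s - d * (s ^ 2 / ε ^ 2 / 4))
          = (2 * μ * ε ^ 2 - d * s) ^ 2 / (4 * d * ε ^ 2) := by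
        field_simp
        ring
      rw [← sub_nonneg, expand]
      positivity
    have h6 : d * (s ^ 2 / ε ^ 2 / 4) ≤ d * Real.exp (s / ε) := by
      apply mul_le_mul_of_nonneg_left _ hd.le
      calc s ^ 2 / ε ^ 2 / 4 = (s / ε) ^ 2 / 4 := by rw [div_pow]
        _ ≤ _ := sq_div_four_le_exp (by positivity)
    linarith

lemma phi_level (μ d ε β : ℝ) (hμ : 0 < μ) (hd : 0 < d) (hε : 0 < ε) :
    ∃ A B : ℝ, ∀ s, β ≤ μ * s - d * Real.exp (s / ε) → s ∈ Set.Icc A B := by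
  set q : ℝ := d / (4 * ε ^ 2) with hq
  have hqpos : 0 < q := by positivity
  refine ⟨min 0 (β / μ), max 1 ((μ + 1 + max 0 (-β)) / q), fun s hs => ?_⟩
  constructor
  · rcases le_or_gt 0 s with h | h
    · exact le_trans (min_le_left _ _) h
    · have h2 : 0 < d * Real.exp (s / ε) := mul_pos hd (Real.exp_pos _)
      have : β ≤ μ * s := by linarith
      have : β / μ ≤ s := (div_le_iff₀' hμ).mpr this
      exact le_trans (min_le_right _ _) this
  · by_contra hcon
    push_neg at hcon
    have hs1 : 1 < s := lt_of_le_of_lt (le_max_left _ _) hcon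
    have hs2 : (μ + 1 + max 0 (-β)) / q < s := lt_of_le_of_lt (le_max_right _ _) hcon
    have hqs : μ + 1 + max 0 (-β) < q * s := by
      rw [div_lt_iff₀ hqpos] at hs2; linarith [hs2]
    -- exp bound: exp(s/ε) ≥ (s/ε)²/4 = q s² / d
    have hexp : q * s ^ 2 / d ≤ Real.exp (s / ε) := by
      have h1 : (s / ε) ^ 2 / 4 ≤ Real.exp (s / ε) := sq_div_four_le_exp (by positivity)
      have : q * s ^ 2 / d = (s / ε) ^ 2 / 4 := by
        rw [hq, div_pow]; field_simp
      linarith [this ▸ h1]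
    have hds : q * s ^ 2 ≤ d * Real.exp (s / ε) := by
      calc q * s ^ 2 = d * (q * s ^ 2 / d) := by field_simp
        _ ≤ d * Real.exp (s / ε) := mul_le_mul_of_nonneg_left hexp hd.le
    have hβ : max 0 (-β) ≥ -β := le_max_right _ _
    have hm0 : max 0 (-β) ≥ 0 := le_max_left _ _
    nlinarith [hqs, hds, hs, hs1]


lemma ereal_cases (x : EReal) (hx : x ≠ ⊥) : x = ⊤ ∨ ∃ t : ℝ, x = (t : EReal) := by
  induction x using EReal.rec with
  | bot => exact absurd rfl hx
  | coe t => exact Or.inr ⟨t, rfl⟩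
  | top => exact Or.inl rfl

lemma fenchel_le {ι : Type*} [Fintype ι] (g : (ι → ℝ) → EReal) (y x : ι → ℝ) :
    (((∑ i, y i * x i : ℝ)) : EReal) - g x ≤ fconj g y :=
  le_iSup (fun x => (((∑ i, y i * x i : ℝ)) : EReal) - g x) x

lemma fconj_ne_bot {ι : Type*} [Fintype ι] (g : (ι → ℝ) → EReal)
    (hgbot : ∀ x, g x ≠ ⊥) (hgtop : ∃ x, g x ≠ ⊤) (y : ι → ℝ) :
    fconj g y ≠ ⊥ := by
  obtain ⟨x0, hx0⟩ := hgtop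
  obtain ⟨t0, ht0⟩ := (ereal_cases (g x0) (hgbot x0)).resolve_left hx0
  intro hbot
  have h := fenchel_le g y x0
  rw [hbot, ht0, le_bot_iff] at h
  have : (((∑ i, y i * x0 i : ℝ)) : EReal) - (t0 : EReal) = (((∑ i, y i * x0 i) - t0 : ℝ) : EReal) := by
    norm_cast
  rw [this] at h
  exact EReal.coe_ne_bot _ h

section attain
variable {ι : Type*} [Fintype ι]

lemma sum_ne_bot {α : Type*} (s : Finset α) (F : α → EReal) (h : ∀ i ∈ s, F i ≠ ⊥) :
    ∑ i ∈ s, F i ≠ ⊥ := by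
  classical
  induction s using Finset.cons_induction with
  | empty => simp
  | cons a s ha ih =>
    rw [Finset.sum_cons]
    intro hb
    rcases EReal.add_eq_bot_iff.mp hb with h' | h'
    · exact h a (Finset.mem_cons_self a s) h'
    · exact ih (fun i hi => h i (Finset.mem_cons_of_mem hi)) h'

lemma neg_sub_ne_top (C1 C2 : EReal) (h1 : C1 ≠ ⊥) (h2 : C2 ≠ ⊥) : -C1 - C2 ≠ ⊤ := by
  rcases ereal_cases C1 h1 with rfl | ⟨c1, rfl⟩ <;>
    rcases ereal_cases C2 h2 with rfl | ⟨c2, rfl⟩ <;>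
    simp [EReal.bot_sub, EReal.sub_top]
  · norm_cast
    exact EReal.coe_ne_top _

lemma shuf1 (A : ℝ) (b C1 C2 : EReal) (hb : b ≠ ⊥) (h1 : C1 ≠ ⊥) (h2 : C2 ≠ ⊥) :
    -(A : EReal) - (b + C1) - C2 = -(A : EReal) - b + (-C1 - C2) := by
  rcases ereal_cases b hb with rfl | ⟨br, rfl⟩
  · simp [EReal.top_add_of_ne_bot h1, EReal.sub_top, EReal.bot_sub, EReal.bot_add]
  rcases ereal_cases C1 h1 with rfl | ⟨c1, rfl⟩
  · simp [EReal.add_top_of_ne_bot (EReal.coe_ne_bot br), EReal.sub_top, EReal.bot_sub,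
      EReal.neg_top, EReal.add_bot]
  rcases ereal_cases C2 h2 with rfl | ⟨c2, rfl⟩
  · simp [EReal.sub_top, EReal.add_bot]
  · norm_cast; ring

lemma shuf2 (A : ℝ) (b C1 C2 : EReal) (hb : b ≠ ⊥) (h1 : C1 ≠ ⊥) (h2 : C2 ≠ ⊥) :
    -(A : EReal) - C1 - (b + C2) = -(A : EReal) - b + (-C1 - C2) := by
  rcases ereal_cases C1 h1 with rfl | ⟨c1, rfl⟩
  · rcases ereal_cases b hb with rfl | ⟨br, rfl⟩
    · simp [EReal.sub_top, EReal.bot_sub, EReal.neg_top, EReal.bot_add, EReal.add_bot,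
        EReal.top_add_of_ne_bot h2]
    · simp [EReal.sub_top, EReal.bot_sub, EReal.neg_top, EReal.bot_add, EReal.add_bot]
  rcases ereal_cases b hb with rfl | ⟨br, rfl⟩
  · simp [EReal.top_add_of_ne_bot h2, EReal.sub_top, EReal.bot_add, EReal.add_bot]
  rcases ereal_cases C2 h2 with rfl | ⟨c2, rfl⟩
  · simp [EReal.add_top_of_ne_bot (EReal.coe_ne_bot br), EReal.sub_top, EReal.add_bot]
  · norm_cast; ring

lemma regroup_sum {X ι : Type*} [Fintype X] [Fintype ι] [DecidableEq ι]
    (σ : X → ι) (F : X → ℝ) (e : ι → ℝ) :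
    ∑ x : X, F x * e (σ x)
      = ∑ i : ι, (∑ x : X, if σ x = i then F x else 0) * e i := by
  have : ∀ i : ι, (∑ x : X, if σ x = i then F x else 0) * e i
      = ∑ x : X, (if σ x = i then F x * e i else 0) := by
    intro i
    rw [Finset.sum_mul]
    exact Finset.sum_congr rfl fun x _ => by split <;> simp
  simp_rw [this]
  rw [Finset.sum_comm]
  exact Finset.sum_congr rfl fun x _ => by
    rw [Finset.sum_ite_eq Finset.univ (σ x) (fun i => F x * e i)]
    simp

lemma attain_abstract {ι : Type*} [Fintype ι] (Φ : (ι → ℝ) → EReal)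
    (hclosed : ∀ a : ℝ, IsClosed {l : ι → ℝ | (a : EReal) ≤ Φ l})
    (hbdd : ∀ a : ℝ, ∃ A B : ι → ℝ, ∀ l, (a : EReal) ≤ Φ l → ∀ i, l i ∈ Set.Icc (A i) (B i)) :
    ∃ lj, ∀ l', Φ l' ≤ Φ lj := by
  classical
  by_cases htop : ∃ l, Φ l = ⊤
  · obtain ⟨l0, h0⟩ := htop
    exact ⟨l0, fun l' => h0 ▸ le_top⟩
  push_neg at htop
  by_cases hbot : ∀ l, Φ l = ⊥
  · exact ⟨fun _ => 0, fun l' => (hbot l').le.trans (by simp)⟩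
  push_neg at hbot
  obtain ⟨l0, h0⟩ := hbot
  set a : ℝ := (Φ l0).toReal with ha
  have hal0 : (a : EReal) ≤ Φ l0 := by
    rw [ha, EReal.coe_toReal (htop l0) h0]
  set K : Set (ι → ℝ) := {l | (a : EReal) ≤ Φ l} with hK
  have hKne : l0 ∈ K := hal0
  obtain ⟨A, B, hAB⟩ := hbdd a
  have hKsub : K ⊆ Set.pi Set.univ (fun i => Set.Icc (A i) (B i)) := by
    intro l hl i _
    exact hAB l hl i
  have hKcompact : IsCompact K :=
    (isCompact_univ_pi (fun i => isCompact_Icc)).of_isClosed_subset (hclosed a) hKsub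
  -- find max on K
  suffices h : ∃ lj ∈ K, ∀ l' ∈ K, Φ l' ≤ Φ lj by
    obtain ⟨lj, hljK, hmax⟩ := h
    refine ⟨lj, fun l' => ?_⟩
    by_cases hl' : l' ∈ K
    · exact hmax l' hl'
    · have : ¬ ((a : EReal) ≤ Φ l') := hl'
      exact (not_le.mp this).le.trans (hal0.trans (hmax l0 hKne))
  by_contra hcon
  push_neg at hcon
  -- open cover
  set U : K → Set (ι → ℝ) := fun m => {l | Φ l < Φ m.1} with hU
  have hUopen : ∀ m : K, IsOpen (U m) := by
    intro m
    have hmne : Φ m.1 ≠ ⊥ := by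
      intro h
      have hm2 : (a : EReal) ≤ Φ m.1 := m.2
      rw [h, le_bot_iff] at hm2
      exact EReal.coe_ne_bot a hm2
    have : U m = {l | Φ l < ((Φ m.1).toReal : EReal)} := by
      ext l
      simp only [hU, Set.mem_setOf_eq, EReal.coe_toReal (htop m.1) hmne]
    rw [this]
    have : {l | Φ l < (((Φ m.1).toReal : ℝ) : EReal)} = {l | (((Φ m.1).toReal : ℝ) : EReal) ≤ Φ l}ᶜ := by
      ext l; simp [not_le]
    rw [this]
    exact (hclosed _).isOpen_compl
  have hcover : K ⊆ ⋃ m : K, U m := by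
    intro l hl
    obtain ⟨l', hl'K, hlt⟩ := hcon l hl
    exact Set.mem_iUnion.mpr ⟨⟨l', hl'K⟩, hlt⟩
  obtain ⟨t, ht⟩ := hKcompact.elim_finite_subcover U hUopen hcover
  have htne : t.Nonempty := by
    rcases Finset.eq_empty_or_nonempty t with h | h
    · exfalso
      have := ht hKne
      simp [h] at this
    · exact h
  obtain ⟨m, hmt, hmmax⟩ := t.exists_max_image (fun m => Φ m.1) htne
  have : m.1 ∈ K := m.2
  have hmem := ht this
  rw [Set.mem_iUnion₂] at hmem
  obtain ⟨m', hm't, hm'⟩ := hmem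
  exact absurd (hmmax m' hm't) (not_le.mpr hm')
lemma attain_aux (ε : ℝ) (hε : 0 < ε) (c : ι → ℝ) (hc : ∀ i, 0 < c i)
    (g : (ι → ℝ) → EReal) (hgbot : ∀ x, g x ≠ ⊥) (hgtop : ∃ x, g x ≠ ⊤)
    (μ : ι → ℝ) (hμ : ∀ i, 0 < μ i) (hgμ : g μ ≠ ⊤)
    (d : EReal) (hd : d ≠ ⊤) :
    ∃ lj : ι → ℝ, ∀ l' : ι → ℝ,
      -((ε * ∑ i, c i * Real.exp (l' i / ε) : ℝ) : EReal) - fconj g (fun i => -(l' i)) + d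
        ≤ -((ε * ∑ i, c i * Real.exp (lj i / ε) : ℝ) : EReal) - fconj g (fun i => -(lj i)) + d := by
  classical
  rcases eq_or_ne d ⊥ with hdb | hdb
  · subst hdb
    exact ⟨fun _ => 0, fun l' => by simp [EReal.add_bot]⟩
  obtain ⟨dr, hdr⟩ := (ereal_cases d hdb).resolve_left hd
  subst hdr
  set G : (ι → ℝ) → EReal := fun l => fconj g (fun i => -(l i)) with hGdef
  have hGbot : ∀ l, G l ≠ ⊥ := fun l => fconj_ne_bot g hgbot hgtop _
  obtain ⟨gr, hgr⟩ := (ereal_cases (g μ) (hgbot μ)).resolve_left hgμ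
  set r : (ι → ℝ) → ℝ := fun l => -(ε * ∑ i, c i * Real.exp (l i / ε)) + dr with hrdef
  have hrcont : Continuous r := by
    apply Continuous.add _ continuous_const
    apply Continuous.neg
    apply Continuous.mul continuous_const
    exact continuous_finset_sum _ fun i _ =>
      continuous_const.mul (Real.continuous_exp.comp (by fun_prop : Continuous fun l : ι → ℝ => l i / ε))
  -- key rewriting
  have hkey : ∀ l, -((ε * ∑ i, c i * Real.exp (l i / ε) : ℝ) : EReal) - fconj g (fun i => -(l i)) + (dr : EReal)
      = ((r l : ℝ) : EReal) - G l := by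
    intro l
    rcases ereal_cases (G l) (hGbot l) with hG | ⟨t, hG⟩
    · rw [show fconj g (fun i => -(l i)) = G l from rfl, hG, EReal.sub_top, EReal.bot_add, EReal.sub_top]
    · rw [show fconj g (fun i => -(l i)) = G l from rfl, hG]
      norm_cast
      simp only [hrdef]
      ring
  -- Fenchel lower bound on G
  have hGlb : ∀ l : ι → ℝ, (((-(∑ i, l i * μ i)) - gr : ℝ) : EReal) ≤ G l := by
    intro l
    have h := fenchel_le g (fun i => -(l i)) μ
    rw [hgr] at h
    have he : ((∑ i, (fun i => -(l i)) i * μ i : ℝ) : EReal) - (gr : EReal)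
        = (((-(∑ i, l i * μ i)) - gr : ℝ) : EReal) := by
      push_cast
      congr 1
      · norm_cast
        rw [← Finset.sum_neg_distrib]
        exact Finset.sum_congr rfl fun i _ => by ring
    rwa [he] at h
  -- the coercive upper bound ψ
  set ψ : (ι → ℝ) → ℝ :=
    fun l => dr + gr + ∑ i, (l i * μ i - ε * (c i * Real.exp (l i / ε))) with hψdef
  have hΦle : ∀ l, ((r l : ℝ) : EReal) - G l ≤ ((ψ l : ℝ) : EReal) := by
    intro l
    set w : ℝ := (-(∑ i, l i * μ i)) - gr with hw
    have h1 : -(G l) ≤ ((-w : ℝ) : EReal) := by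
      rw [EReal.coe_neg]
      exact EReal.neg_le_neg_iff.mpr (hGlb l)
    have h2 : ((r l : ℝ) : EReal) - G l ≤ ((r l : ℝ) : EReal) + ((-w : ℝ) : EReal) := by
      rw [sub_eq_add_neg]
      exact add_le_add le_rfl h1
    have h3 : ((r l : ℝ) : EReal) + ((-w : ℝ) : EReal) = ((r l + -w : ℝ) : EReal) := by norm_cast
    have h4 : r l + -w = ψ l := by
      simp only [hrdef, hψdef, hw, Finset.mul_sum, Finset.sum_sub_distrib]
      ring
    rw [h3, h4] at h2
    exact h2
  -- apply the abstract lemma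
  have hmain : ∃ lj : ι → ℝ, ∀ l', ((r l' : ℝ) : EReal) - G l' ≤ ((r lj : ℝ) : EReal) - G lj := by
    apply attain_abstract
    · -- closed superlevel sets
      intro a
      have hiff : ∀ l : ι → ℝ, ((a : EReal) ≤ ((r l : ℝ) : EReal) - G l)
          ↔ ∀ x : ι → ℝ, ((∑ i, -(l i) * x i : ℝ) : EReal) - g x ≤ ((r l - a : ℝ) : EReal) := by
        intro l
        have step1 : ((a : EReal) ≤ ((r l : ℝ) : EReal) - G l) ↔ G l ≤ ((r l - a : ℝ) : EReal) := by
          rcases ereal_cases (G l) (hGbot l) with hG | ⟨t, hG⟩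
          · rw [hG, EReal.sub_top]
            simp only [le_bot_iff]
            constructor
            · intro h; exact absurd h (EReal.coe_ne_bot a)
            · intro h; exact absurd (top_le_iff.mp h) (EReal.coe_ne_top _)
          · rw [hG]
            have : ((r l : ℝ) : EReal) - (t : EReal) = ((r l - t : ℝ) : EReal) := by norm_cast
            rw [this, EReal.coe_le_coe_iff, EReal.coe_le_coe_iff]
            constructor <;> (intro h; linarith)
        rw [step1]
        have : G l = ⨆ x : ι → ℝ, ((∑ i, -(l i) * x i : ℝ) : EReal) - g x := rfl
        rw [this, iSup_le_iff]
      have hset : {l : ι → ℝ | (a : EReal) ≤ ((r l : ℝ) : EReal) - G l}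
          = ⋂ x : ι → ℝ, {l : ι → ℝ | ((∑ i, -(l i) * x i : ℝ) : EReal) - g x ≤ ((r l - a : ℝ) : EReal)} := by
        ext l
        simp only [Set.mem_setOf_eq, Set.mem_iInter]
        exact hiff l
      rw [hset]
      apply isClosed_iInter
      intro x
      rcases ereal_cases (g x) (hgbot x) with hg' | ⟨t, hg'⟩
      · have : {l : ι → ℝ | ((∑ i, -(l i) * x i : ℝ) : EReal) - g x ≤ ((r l - a : ℝ) : EReal)} = Set.univ := by
          ext l
          simp [hg', EReal.sub_top]
        rw [this]; exact isClosed_univ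
      · have : {l : ι → ℝ | ((∑ i, -(l i) * x i : ℝ) : EReal) - g x ≤ ((r l - a : ℝ) : EReal)}
            = {l : ι → ℝ | (∑ i, -(l i) * x i) - t ≤ r l - a} := by
          ext l
          rw [Set.mem_setOf_eq, Set.mem_setOf_eq, hg']
          have : ((∑ i, -(l i) * x i : ℝ) : EReal) - (t : EReal) = (((∑ i, -(l i) * x i) - t : ℝ) : EReal) := by
            norm_cast
          rw [this, EReal.coe_le_coe_iff]
        rw [this]
        apply isClosed_le
        · apply Continuous.sub _ continuous_const
          exact continuous_finset_sum _ fun i _ => ((continuous_apply i).neg.mul continuous_const)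
        · exact hrcont.sub continuous_const
    · -- bounded superlevel sets
      intro a
      set M : ι → ℝ := fun k => (μ k) ^ 2 * ε ^ 2 / (ε * c k) with hM
      have hMnn : ∀ k, 0 ≤ M k := fun k => by
        have := hμ k; have := hc k; positivity
      set β : ℝ := a - dr - gr - ∑ k, M k with hβ
      choose A B hAB using fun i => phi_level (μ i) (ε * c i) ε β (hμ i) (mul_pos hε (hc i)) hε
      refine ⟨A, B, fun l hl i => ?_⟩
      have hψl : (a : EReal) ≤ ((ψ l : ℝ) : EReal) := le_trans hl (hΦle l)
      rw [EReal.coe_le_coe_iff] at hψl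
      set φ : ι → ℝ := fun k => l k * μ k - ε * (c k * Real.exp (l k / ε)) with hφ
      have hφM : ∀ k, φ k ≤ M k := by
        intro k
        have h := phi_upper (μ k) (ε * c k) ε (hμ k) (mul_pos hε (hc k)) hε (l k)
        simp only [hφ, hM]
        nlinarith [h]
      have hsplit : ∑ k, φ k = φ i + ∑ k ∈ Finset.univ.erase i, φ k :=
        (Finset.add_sum_erase _ _ (Finset.mem_univ i)).symm
      have h2 : ∑ k ∈ Finset.univ.erase i, φ k ≤ ∑ k, M k := by
        refine le_trans (Finset.sum_le_sum fun k _ => hφM k) ?_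
        exact Finset.sum_le_sum_of_subset_of_nonneg (Finset.subset_univ _) fun k _ _ => hMnn k
      have hβφ : β ≤ μ i * l i - (ε * c i) * Real.exp (l i / ε) := by
        have hψeq : ψ l = dr + gr + ∑ k, φ k := rfl
        have : β ≤ φ i := by rw [hψeq, hsplit] at hψl; linarith
        simp only [hφ] at this
        nlinarith [this]
      exact hAB i (l i) hβφ
  obtain ⟨lj, hlj⟩ := hmain
  refine ⟨lj, fun l' => ?_⟩
  rw [hkey l', hkey lj]
  exact hlj l' 


set_option maxHeartbeats 2000000 in
/-- Under Assumptions 1 and 3, every block-coordinate subproblem of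
the dual has a nonempty set of maximizers. -/
theorem block_coordinate_subproblems_attained
    (T N : ℕ) (ε : ℝ) (hε : 0 < ε)
    (E : Finset (Fin T × Fin T))
    (hE : ∀ e ∈ E, e.1 ≠ e.2)
    (hconn : (SimpleGraph.fromRel (fun a b : Fin T => (a, b) ∈ E)).Connected)
    (Cm : Fin T × Fin T → Fin N → Fin N → ℝ)
    (g : Fin T → (Fin N → ℝ) → EReal)
    (f : Fin T × Fin T → (Fin N × Fin N → ℝ) → EReal)
    (hg : ∀ t : Fin T, properFn (g t) ∧ convexFn (g t) ∧ LowerSemicontinuous (g t))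
    (hf : ∀ e ∈ E, properFn (f e) ∧ convexFn (f e) ∧ LowerSemicontinuous (f e))
    -- Assumption 3
    (hA3g : ∀ j : Fin T, ∃ μ : Fin N → ℝ, (∀ i, 0 < μ i) ∧
      (isPolyhedralFn (g j) → μ ∈ edom (g j)) ∧
      (¬ isPolyhedralFn (g j) → μ ∈ intrinsicInterior ℝ (edom (g j))))
    (hA3f : ∀ e ∈ E, ∃ R : Fin N × Fin N → ℝ, (∀ q, 0 < R q) ∧
      (isPolyhedralFn (f e) → R ∈ edom (f e)) ∧
      (¬ isPolyhedralFn (f e) → R ∈ intrinsicInterior ℝ (edom (f e))))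
    -- Assumption 1 (feasibility; `⟨C,M⟩ < ∞` holds automatically, the cost being real)
    (hfeas : ∃ M : Tens T N, (∀ x, 0 ≤ M x) ∧
      (∀ t : Fin T, g t (tproj t M) ≠ ⊤) ∧
      (∀ e ∈ E, f e (tbiproj e.1 e.2 M) ≠ ⊤)) :
    (∀ j : Fin T, ∀ p : DVar T N E, ∃ lj : Fin N → ℝ,
      ∀ l' : Fin N → ℝ,
        dualObjR ε E Cm g f (Function.update p.1 j l', p.2)
          ≤ dualObjR ε E Cm g f (Function.update p.1 j lj, p.2)) ∧
    (∀ e : {e : Fin T × Fin T // e ∈ E}, ∀ p : DVar T N E, ∃ Re : Fin N × Fin N → ℝ,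
      ∀ R' : Fin N × Fin N → ℝ,
        dualObjR ε E Cm g f (p.1, Function.update p.2 e R')
          ≤ dualObjR ε E Cm g f (p.1, Function.update p.2 e Re)) := by
  classical
  constructor
  · -- vertex subproblems
    intro j p
    set C2 : EReal := ∑ e : {e : Fin T × Fin T // e ∈ E}, fconj (f e.1) (fun q => -(p.2 e q))
      with hC2
    set C1 : EReal := ∑ t ∈ Finset.univ.erase j, fconj (g t) (fun i => -(p.1 t i)) with hC1
    have hC1b : C1 ≠ ⊥ :=
      sum_ne_bot _ _ (fun t _ => fconj_ne_bot _ (hg t).1.1 (hg t).1.2 _)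
    have hC2b : C2 ≠ ⊥ :=
      sum_ne_bot _ _ (fun e _ => fconj_ne_bot _ (hf e.1 e.2).1.1 (hf e.1 e.2).1.2 _)
    set d : EReal := -C1 - C2 with hdd
    have hdt : d ≠ ⊤ := neg_sub_ne_top C1 C2 hC1b hC2b
    set W : (Fin T → Fin N) → ℝ := fun x =>
      KtensR ε E Cm x * ((∏ t ∈ Finset.univ.erase j, Real.exp (p.1 t (x t) / ε)) *
        ∏ e : {e : Fin T × Fin T // e ∈ E}, Real.exp (p.2 e (x e.1.1, x e.1.2) / ε)) with hW
    have hWpos : ∀ x, 0 < W x := by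
      intro x
      rw [hW]
      simp only [KtensR]
      positivity
    set c : Fin N → ℝ := fun i => ∑ x : Fin T → Fin N, if x j = i then W x else 0 with hc
    have hcpos : ∀ i, 0 < c i := by
      intro i
      apply Finset.sum_pos'
      · intro x _
        split
        · exact (hWpos x).le
        · exact le_refl 0
      · refine ⟨fun _ => i, Finset.mem_univ _, ?_⟩
        rw [if_pos rfl]
        exact hWpos _
    have hXid : ∀ l : Fin N → ℝ,
        (ε * ∑ x : Fin T → Fin N, KtensR ε E Cm x
            * Utens ε (Function.update p.1 j l, p.2) x)
          = ε * ∑ i, c i * Real.exp (l i / ε) := by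
      intro l
      congr 1
      have hterm : ∀ x, KtensR ε E Cm x * Utens ε (Function.update p.1 j l, p.2) x
          = W x * Real.exp (l (x j) / ε) := by
        intro x
        rw [hW]
        simp only [Utens]
        rw [← Finset.mul_prod_erase Finset.univ _ (Finset.mem_univ j)]
        simp only [Function.update_self]
        have hrest : ∏ t ∈ Finset.univ.erase j,
              Real.exp (Function.update p.1 j l t (x t) / ε)
            = ∏ t ∈ Finset.univ.erase j, Real.exp (p.1 t (x t) / ε) :=
          Finset.prod_congr rfl fun t ht => by
            rw [Function.update_of_ne (Finset.ne_of_mem_erase ht)]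
        rw [hrest]
        ring
      simp_rw [hterm]
      exact regroup_sum (fun x => x j) W (fun i => Real.exp (l i / ε))
    have hsum : ∀ l : Fin N → ℝ,
        (∑ t : Fin T, fconj (g t) (fun i => -(Function.update p.1 j l t i)))
          = fconj (g j) (fun i => -(l i)) + C1 := by
      intro l
      rw [← Finset.add_sum_erase Finset.univ _ (Finset.mem_univ j)]
      congr 1
      · simp only [Function.update_self]
      · exact Finset.sum_congr rfl fun t ht => by
          rw [Function.update_of_ne (Finset.ne_of_mem_erase ht)]
    have hform : ∀ l : Fin N → ℝ,
        dualObjR ε E Cm g f (Function.update p.1 j l, p.2)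
          = -((ε * ∑ i, c i * Real.exp (l i / ε) : ℝ) : EReal)
              - fconj (g j) (fun i => -(l i)) + d := by
      intro l
      simp only [dualObjR]
      rw [hXid l, hsum l, hdd]
      exact shuf1 _ _ C1 C2 (fconj_ne_bot _ (hg j).1.1 (hg j).1.2 _) hC1b hC2b
    obtain ⟨μ, hμpos, hμ1, hμ2⟩ := hA3g j
    have hgμ : g j μ ≠ ⊤ := by
      by_cases hpoly : isPolyhedralFn (g j)
      · exact hμ1 hpoly
      · exact intrinsicInterior_subset (hμ2 hpoly)
    obtain ⟨lj, hlj⟩ := attain_aux ε hε c hcpos (g j) (hg j).1.1 (hg j).1.2 μ hμpos hgμ d hdt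
    refine ⟨lj, fun l' => ?_⟩
    rw [hform l', hform lj]
    exact hlj l'
  · -- edge subproblems
    intro e0 p
    have hne : e0.1.1 ≠ e0.1.2 := hE e0.1 e0.2
    set C1 : EReal := ∑ t : Fin T, fconj (g t) (fun i => -(p.1 t i)) with hC1
    set C2 : EReal := ∑ e ∈ Finset.univ.erase e0, fconj (f e.1) (fun q => -(p.2 e q)) with hC2
    have hC1b : C1 ≠ ⊥ :=
      sum_ne_bot _ _ (fun t _ => fconj_ne_bot _ (hg t).1.1 (hg t).1.2 _)
    have hC2b : C2 ≠ ⊥ :=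
      sum_ne_bot _ _ (fun e _ => fconj_ne_bot _ (hf e.1 e.2).1.1 (hf e.1 e.2).1.2 _)
    set d : EReal := -C1 - C2 with hdd
    have hdt : d ≠ ⊤ := neg_sub_ne_top C1 C2 hC1b hC2b
    set W : (Fin T → Fin N) → ℝ := fun x =>
      KtensR ε E Cm x * ((∏ t : Fin T, Real.exp (p.1 t (x t) / ε)) *
        ∏ e ∈ Finset.univ.erase e0, Real.exp (p.2 e (x e.1.1, x e.1.2) / ε)) with hW
    have hWpos : ∀ x, 0 < W x := by
      intro x
      rw [hW]
      simp only [KtensR]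
      positivity
    set c : Fin N × Fin N → ℝ := fun q =>
      ∑ x : Fin T → Fin N, if (x e0.1.1, x e0.1.2) = q then W x else 0 with hc
    have hcpos : ∀ q, 0 < c q := by
      intro q
      apply Finset.sum_pos'
      · intro x _
        split
        · exact (hWpos x).le
        · exact le_refl 0
      · refine ⟨fun t => if t = e0.1.2 then q.2 else q.1, Finset.mem_univ _, ?_⟩
        rw [if_pos]
        · exact hWpos _
        · simp [hne]
    have hXid : ∀ R : Fin N × Fin N → ℝ,
        (ε * ∑ x : Fin T → Fin N, KtensR ε E Cm x
            * Utens ε (p.1, Function.update p.2 e0 R) x)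
          = ε * ∑ q, c q * Real.exp (R q / ε) := by
      intro R
      congr 1
      have hterm : ∀ x, KtensR ε E Cm x * Utens ε (p.1, Function.update p.2 e0 R) x
          = W x * Real.exp (R (x e0.1.1, x e0.1.2) / ε) := by
        intro x
        rw [hW]
        simp only [Utens]
        rw [← Finset.mul_prod_erase Finset.univ
          (fun e : {e : Fin T × Fin T // e ∈ E} =>
            Real.exp (Function.update p.2 e0 R e (x e.1.1, x e.1.2) / ε))
          (Finset.mem_univ e0)]
        simp only [Function.update_self]
        have hrest : ∏ e ∈ Finset.univ.erase e0,
              Real.exp (Function.update p.2 e0 R e (x e.1.1, x e.1.2) / ε)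
            = ∏ e ∈ Finset.univ.erase e0, Real.exp (p.2 e (x e.1.1, x e.1.2) / ε) :=
          Finset.prod_congr rfl fun e he => by
            rw [Function.update_of_ne (Finset.ne_of_mem_erase he)]
        rw [hrest]
        ring
      simp_rw [hterm]
      exact regroup_sum (fun x => (x e0.1.1, x e0.1.2)) W (fun q => Real.exp (R q / ε))
    have hsum : ∀ R : Fin N × Fin N → ℝ,
        (∑ e : {e : Fin T × Fin T // e ∈ E},
            fconj (f e.1) (fun q => -(Function.update p.2 e0 R e q)))
          = fconj (f e0.1) (fun q => -(R q)) + C2 := by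
      intro R
      rw [← Finset.add_sum_erase Finset.univ _ (Finset.mem_univ e0)]
      congr 1
      · simp only [Function.update_self]
      · exact Finset.sum_congr rfl fun e he => by
          rw [Function.update_of_ne (Finset.ne_of_mem_erase he)]
    have hform : ∀ R : Fin N × Fin N → ℝ,
        dualObjR ε E Cm g f (p.1, Function.update p.2 e0 R)
          = -((ε * ∑ q, c q * Real.exp (R q / ε) : ℝ) : EReal)
              - fconj (f e0.1) (fun q => -(R q)) + d := by
      intro R
      simp only [dualObjR]
      rw [hXid R, hsum R, hdd]
      exact shuf2 _ _ C1 C2 (fconj_ne_bot _ (hf e0.1 e0.2).1.1 (hf e0.1 e0.2).1.2 _) hC1b hC2b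
    obtain ⟨μ, hμpos, hμ1, hμ2⟩ := hA3f e0.1 e0.2
    have hfμ : f e0.1 μ ≠ ⊤ := by
      by_cases hpoly : isPolyhedralFn (f e0.1)
      · exact hμ1 hpoly
      · exact intrinsicInterior_subset (hμ2 hpoly)
    obtain ⟨Re, hRe⟩ := attain_aux ε hε c hcpos (f e0.1) (hf e0.1 e0.2).1.1
      (hf e0.1 e0.2).1.2 μ hμpos hfμ d hdt
    refine ⟨Re, fun R' => ?_⟩
    rw [hform R', hform Re]
    exact hRe R'
end attain
end
end

section
/- Fix ε > 0, a cost tensor C with values in ℝ ∪ {+∞}, vectors λ_t ∈ ℝ^N (t ∈ V), and matrices Λ_{t1,t2} ∈ ℝ^{N×N} ((t1,t2) ∈ E), and define 𝓛(M) = ⟨C,M⟩ + εD(M) − Σ_{t∈V} λ_t^T P_t(M) − Σ_{(t1,t2)∈E} tr(Λ_{t1,t2}^T P_{t1,t2}(M)) for nonnegative tensors M. Then the infimum of 𝓛 over all nonnegative 𝒯-mode tensors M of side N equals −ε⟨K, U(λ,Λ)⟩ + N^𝒯·ε, and it is attained at M = K ⊙ U(λ,Λ) (elementwise product). -/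
open scoped BigOperators
open Filter

noncomputable section

/-- `⟨C, M⟩` (in `EReal`, where `0 · ⊤ = 0`). -/
def einner {T N : ℕ} (C : (Fin T → Fin N) → EReal) (M : Tens T N) : EReal :=
  ∑ x : Fin T → Fin N, C x * ((M x : ℝ) : EReal)

/-- `exp(-c/ε)` with the convention `exp(-∞) = 0`. -/
def expNegE (ε : ℝ) (c : EReal) : ℝ :=
  if c = ⊤ then 0 else Real.exp (-c.toReal / ε)

lemma ecoe_sum {α : Type*} (s : Finset α) (f : α → ℝ) :
    ((∑ x ∈ s, f x : ℝ) : EReal) = ∑ x ∈ s, (f x : EReal) :=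
  map_sum (⟨⟨(fun r : ℝ => (r : EReal)), EReal.coe_zero⟩, EReal.coe_add⟩ : ℝ →+ EReal) f s

lemma key_ineq (b m : ℝ) (hm : 0 ≤ m) : m * (1 + b - Real.log m) ≤ Real.exp b := by
  rcases hm.eq_or_lt with h | h
  · simp [← h, (Real.exp_pos b).le]
  · have h1 : (b - Real.log m) + 1 ≤ Real.exp (b - Real.log m) := Real.add_one_le_exp _
    have h2 : Real.exp (b - Real.log m) = Real.exp b / m := by
      rw [Real.exp_sub, Real.exp_log h]
    rw [h2] at h1
    have := mul_le_mul_of_nonneg_left h1 h.le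
    rw [mul_div_cancel₀ _ h.ne'] at this
    nlinarith

lemma pointwise_le (ε : ℝ) (hε : 0 < ε) (c : EReal) (hc : c ≠ ⊥) (a m : ℝ) (hm : 0 ≤ m) :
    ((-(ε * (expNegE ε c * Real.exp (a / ε))) + ε : ℝ) : EReal)
      ≤ c * (m : EReal) + ((ε * (m * Real.log m - m + 1) - a * m : ℝ) : EReal) := by
  induction c using EReal.rec with
  | bot => exact absurd rfl hc
  | top =>
    rw [expNegE]
    simp only [if_pos rfl, mul_zero, zero_mul, neg_zero, zero_add]
    rcases hm.eq_or_lt with h | h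
    · rw [← h]
      norm_num
    · rw [EReal.top_mul_coe_of_pos h, EReal.top_add_coe]
      exact le_top
  | coe r =>
    rw [expNegE]
    simp only [if_neg (EReal.coe_ne_top r), EReal.toReal_coe, ← EReal.coe_mul, ← EReal.coe_add,
      EReal.coe_le_coe_iff]
    set b := (a - r) / ε with hbdef
    have hb : a - r = ε * b := by rw [hbdef, mul_div_cancel₀ _ hε.ne']
    have h2 : Real.exp (-r / ε) * Real.exp (a / ε) = Real.exp b := by
      rw [← Real.exp_add, hbdef]; ring_nf
    rw [h2]
    have h1 := key_ineq b m hm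
    nlinarith [mul_le_mul_of_nonneg_left h1 hε.le]

lemma pointwise_eq (ε : ℝ) (hε : 0 < ε) (c : EReal) (hc : c ≠ ⊥) (a : ℝ) :
    c * ((expNegE ε c * Real.exp (a / ε) : ℝ) : EReal)
      + ((ε * ((expNegE ε c * Real.exp (a / ε)) *
            Real.log (expNegE ε c * Real.exp (a / ε))
          - expNegE ε c * Real.exp (a / ε) + 1)
        - a * (expNegE ε c * Real.exp (a / ε)) : ℝ) : EReal)
      = ((-(ε * (expNegE ε c * Real.exp (a / ε))) + ε : ℝ) : EReal) := by
  induction c using EReal.rec with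
  | bot => exact absurd rfl hc
  | top =>
    rw [expNegE]
    simp only [if_pos rfl, zero_mul, mul_zero, Real.log_zero, sub_zero, mul_one, neg_zero,
      zero_sub, neg_zero, zero_add]
    norm_num
  | coe r =>
    rw [expNegE]
    simp only [if_neg (EReal.coe_ne_top r), EReal.toReal_coe, ← EReal.coe_mul, ← EReal.coe_add]
    norm_cast
    set b := (a - r) / ε with hbdef
    have hb : a - r = ε * b := by rw [hbdef, mul_div_cancel₀ _ hε.ne']
    have h2 : Real.exp (-r / ε) * Real.exp (a / ε) = Real.exp b := by
      rw [← Real.exp_add, hbdef]; ring_nf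
    rw [h2, Real.log_exp]
    linear_combination (-Real.exp b) * hb

lemma marg_sum {T N : ℕ} (lam : Fin T → Fin N → ℝ) (M : Tens T N) :
    ∑ t : Fin T, ∑ i : Fin N, lam t i * tproj t M i
      = ∑ x : Fin T → Fin N, (∑ t : Fin T, lam t (x t)) * M x := by
  have h1 : ∀ t : Fin T, ∑ i : Fin N, lam t i * tproj t M i
      = ∑ x : Fin T → Fin N, lam t (x t) * M x := by
    intro t
    simp only [tproj, Finset.mul_sum, mul_ite, mul_zero]
    rw [Finset.sum_comm]
    simp [Finset.sum_ite_eq]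
  calc ∑ t : Fin T, ∑ i : Fin N, lam t i * tproj t M i
      = ∑ t : Fin T, ∑ x : Fin T → Fin N, lam t (x t) * M x :=
        Finset.sum_congr rfl fun t _ => h1 t
    _ = ∑ x : Fin T → Fin N, ∑ t : Fin T, lam t (x t) * M x := Finset.sum_comm
    _ = ∑ x : Fin T → Fin N, (∑ t : Fin T, lam t (x t)) * M x := by
        simp [Finset.sum_mul]

lemma bimarg_sum {T N : ℕ} (E : Finset (Fin T × Fin T))
    (Lam : Fin T × Fin T → Fin N × Fin N → ℝ) (M : Tens T N) :
    ∑ e ∈ E, ∑ i : Fin N, ∑ k : Fin N, Lam e (i, k) * tbiproj e.1 e.2 M (i, k)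
      = ∑ x : Fin T → Fin N, (∑ e ∈ E, Lam e (x e.1, x e.2)) * M x := by
  have h1 : ∀ e : Fin T × Fin T,
      ∑ i : Fin N, ∑ k : Fin N, Lam e (i, k) * tbiproj e.1 e.2 M (i, k)
      = ∑ x : Fin T → Fin N, Lam e (x e.1, x e.2) * M x := by
    intro e
    simp only [tbiproj, Finset.mul_sum, mul_ite, mul_zero]
    calc ∑ i : Fin N, ∑ k : Fin N, ∑ x : Fin T → Fin N,
          (if x e.1 = i ∧ x e.2 = k then Lam e (i, k) * M x else 0)
        = ∑ i : Fin N, ∑ x : Fin T → Fin N, ∑ k : Fin N,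
          (if x e.1 = i ∧ x e.2 = k then Lam e (i, k) * M x else 0) :=
          Finset.sum_congr rfl fun i _ => Finset.sum_comm
      _ = ∑ x : Fin T → Fin N, ∑ i : Fin N, ∑ k : Fin N,
          (if x e.1 = i ∧ x e.2 = k then Lam e (i, k) * M x else 0) := Finset.sum_comm
      _ = ∑ x : Fin T → Fin N, Lam e (x e.1, x e.2) * M x := by
          refine Finset.sum_congr rfl fun x _ => ?_
          simp [ite_and, Finset.sum_ite_eq]
  calc ∑ e ∈ E, ∑ i : Fin N, ∑ k : Fin N, Lam e (i, k) * tbiproj e.1 e.2 M (i, k)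
      = ∑ e ∈ E, ∑ x : Fin T → Fin N, Lam e (x e.1, x e.2) * M x :=
        Finset.sum_congr rfl fun e _ => h1 e
    _ = ∑ x : Fin T → Fin N, ∑ e ∈ E, Lam e (x e.1, x e.2) * M x := Finset.sum_comm
    _ = ∑ x : Fin T → Fin N, (∑ e ∈ E, Lam e (x e.1, x e.2)) * M x := by
        simp [Finset.sum_mul]


/-- The infimum of the inner Lagrangian
`𝓛(M) = ⟨C,M⟩ + εD(M) - ∑_t λ_tᵀ P_t(M) - ∑_{(t₁,t₂)∈E} tr(Λ_{t₁,t₂}ᵀ P_{t₁,t₂}(M))`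
over nonnegative tensors equals `-ε⟨K, U(λ,Λ)⟩ + N^𝒯ε`, attained at `M = K ⊙ U(λ,Λ)`. -/
theorem inner_lagrangian_infimum
    (T N : ℕ) (ε : ℝ) (hε : 0 < ε)
    (E : Finset (Fin T × Fin T))
    (C : (Fin T → Fin N) → EReal) (hC : ∀ x, C x ≠ ⊥)
    (lam : Fin T → Fin N → ℝ) (Lam : Fin T × Fin T → Fin N × Fin N → ℝ)
    (K U : Tens T N)
    (hK : ∀ x, K x = expNegE ε (C x))
    (hU : ∀ x, U x = (∏ t : Fin T, Real.exp (lam t (x t) / ε)) *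
      ∏ e ∈ E, Real.exp (Lam e (x e.1, x e.2) / ε))
    (𝓛 : Tens T N → EReal)
    (h𝓛 : ∀ M, 𝓛 M = einner C M + ((ε * entropy M : ℝ) : EReal)
      - (((∑ t : Fin T, ∑ i : Fin N, lam t i * tproj t M i) : ℝ) : EReal)
      - (((∑ e ∈ E, ∑ i : Fin N, ∑ k : Fin N,
            Lam e (i, k) * tbiproj e.1 e.2 M (i, k)) : ℝ) : EReal)) :
    (∀ M : Tens T N, (∀ x, 0 ≤ M x) →
      (((-(ε * ∑ x : Fin T → Fin N, K x * U x) + (N : ℝ) ^ T * ε : ℝ)) : EReal) ≤ 𝓛 M) ∧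
    (∀ x, 0 ≤ K x * U x) ∧
    𝓛 (fun x => K x * U x)
      = (((-(ε * ∑ x : Fin T → Fin N, K x * U x) + (N : ℝ) ^ T * ε : ℝ)) : EReal) := by
  -- the combined dual potential
  set A : (Fin T → Fin N) → ℝ :=
    fun x => (∑ t : Fin T, lam t (x t)) + ∑ e ∈ E, Lam e (x e.1, x e.2) with hA
  have hUA : ∀ x, U x = Real.exp (A x / ε) := by
    intro x
    rw [hU x, hA]
    rw [← Real.exp_sum, ← Real.exp_sum, ← Real.exp_add]
    congr 1
    rw [add_div, Finset.sum_div, Finset.sum_div]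
  -- rewrite the Lagrangian as a sum of pointwise terms
  have hadd : ∀ (X : EReal) (p q r s : ℝ), p - q - r = s → X + ↑p - ↑q - ↑r = X + ↑s := by
    intro X p q r s h
    rw [sub_eq_add_neg, sub_eq_add_neg, ← EReal.coe_neg, ← EReal.coe_neg,
      add_assoc (X + ((p : ℝ) : EReal)), add_assoc X, ← add_assoc ((p : ℝ) : EReal),
      ← EReal.coe_add, ← EReal.coe_add]
    congr 1
    exact EReal.coe_eq_coe_iff.2 (by linarith)
  have hLsum : ∀ M : Tens T N, 𝓛 M = ∑ x : Fin T → Fin N,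
      (C x * ((M x : ℝ) : EReal)
        + ((ε * (M x * Real.log (M x) - M x + 1) - A x * M x : ℝ) : EReal)) := by
    intro M
    rw [h𝓛 M, marg_sum, bimarg_sum]
    have hcomb : (ε * entropy M : ℝ)
        - (∑ x : Fin T → Fin N, (∑ t : Fin T, lam t (x t)) * M x : ℝ)
        - (∑ x : Fin T → Fin N, (∑ e ∈ E, Lam e (x e.1, x e.2)) * M x : ℝ)
        = (∑ x : Fin T → Fin N,
            (ε * (M x * Real.log (M x) - M x + 1) - A x * M x) : ℝ) := by
      rw [entropy, Finset.mul_sum, ← Finset.sum_sub_distrib, ← Finset.sum_sub_distrib]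
      refine Finset.sum_congr rfl fun x _ => ?_
      rw [hA]
      ring
    rw [hadd _ _ _ _ _ hcomb, einner, ecoe_sum, ← Finset.sum_add_distrib]
  -- K⊙U is the pointwise product of expNegE and exp(A/ε)
  have hKU : ∀ x, K x * U x = expNegE ε (C x) * Real.exp (A x / ε) := by
    intro x; rw [hK x, hUA x]
  -- nonnegativity
  have hKU0 : ∀ x, 0 ≤ K x * U x := by
    intro x
    rw [hKU x]
    refine mul_nonneg ?_ (Real.exp_pos _).le
    rw [expNegE]
    split
    · exact le_rfl
    · exact (Real.exp_pos _).le
  -- the constant as a sum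
  have hconst : (((-(ε * ∑ x : Fin T → Fin N, K x * U x) + (N : ℝ) ^ T * ε : ℝ)) : EReal)
      = ∑ x : Fin T → Fin N, ((-(ε * (K x * U x)) + ε : ℝ) : EReal) := by
    rw [← ecoe_sum]
    congr 1
    rw [Finset.sum_add_distrib, Finset.mul_sum, ← Finset.sum_neg_distrib,
      Finset.sum_const, Finset.card_univ, Fintype.card_fun, Fintype.card_fin,
      Fintype.card_fin, nsmul_eq_mul, Nat.cast_pow]
  refine ⟨?_, hKU0, ?_⟩
  · intro M hM
    rw [hLsum M, hconst]
    refine Finset.sum_le_sum fun x _ => ?_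
    have := pointwise_le ε hε (C x) (hC x) (A x) (M x) (hM x)
    rwa [← hKU x] at this
  · rw [hLsum, hconst]
    refine Finset.sum_congr rfl fun x _ => ?_
    have := pointwise_eq ε hε (C x) (hC x) (A x)
    simp only [← hKU x] at this
    exact this
end
end

section
/- Let ε > 0, let C ∈ (ℝ ∪ {+∞})^{N×N} and set K = exp(−C/ε) elementwise (with exp(−∞) = 0). Define the 𝒯-mode tensors K̂ and Û of side N by K̂(i_1,…,i_𝒯) = Π_{t=1}^{𝒯−1} K_{i_t, i_{t+1}} and Û(i_1,…,i_𝒯) = U_{i_1, i_𝒯} · Π_{t=2}^{𝒯−1} u_t^{(i_t)}, where U ∈ ℝ^{N×N} and u_2,…,u_{𝒯−1} ∈ ℝ^N. Define matrices Ψ̂_2 = K, Ψ̂_j = Ψ̂_{j−1} diag(u_{j−1}) K for j = 3,…,𝒯, and Ψ_{𝒯−1} = K, Ψ_j = K diag(u_{j+1}) Ψ_{j+1} for j = 1,…,𝒯−2. Then the projections of the tensor K̂ ⊙ Û (elementwise product) satisfy P_{1,𝒯}(K̂ ⊙ Û) = U ⊙ Ψ_1 and, for every j = 2,…,𝒯−1,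 P_j(K̂ ⊙ Û) = u_j ⊙ ((Ψ̂_j^T ⊙ (Ψ_j U^T)) 𝟏), where 𝟏 ∈ ℝ^N is the all-ones vector, ⊙ denotes elementwise product, and matrix products are ordinary. -/
open scoped BigOperators
open Filter Matrix

noncomputable section

namespace PathAux

variable {N : ℕ}

def Pfx : (n : ℕ) → (Fin n → Matrix (Fin N) (Fin N) ℝ) → ℕ → Matrix (Fin N) (Fin N) ℝ
  | _, _, 0 => 1
  | 0, _, _ + 1 => 1
  | n + 1, A, j + 1 => A 0 * Pfx n (fun t => A t.succ) j

def Sfx : (n : ℕ) → (Fin n → Matrix (Fin N) (Fin N) ℝ) → ℕ → Matrix (Fin N) (Fin N) ℝ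
  | 0, _, _ => 1
  | n + 1, A, 0 => A 0 * Sfx n (fun t => A t.succ) 0
  | n + 1, A, j + 1 => Sfx n (fun t => A t.succ) j

lemma Pfx_zero (n : ℕ) (A : Fin n → Matrix (Fin N) (Fin N) ℝ) : Pfx n A 0 = 1 := by
  cases n <;> rfl

lemma sum_decomp (n : ℕ) (f : (Fin (n + 1) → Fin N) → ℝ) :
    ∑ x : Fin (n + 1) → Fin N, f x
      = ∑ c : Fin N, ∑ y : Fin n → Fin N, f (Fin.cons c y) := by
  rw [← (Fin.consEquiv (fun _ : Fin (n + 1) => Fin N)).sum_comp f, Fintype.sum_prod_type]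
  rfl

lemma prod_cons (n : ℕ) (A : Fin (n + 1) → Matrix (Fin N) (Fin N) ℝ) (c : Fin N)
    (y : Fin (n + 1) → Fin N) :
    (∏ t : Fin (n + 1), A t ((Fin.cons c y : Fin (n + 2) → Fin N) t.castSucc)
        ((Fin.cons c y : Fin (n + 2) → Fin N) t.succ))
      = A 0 c (y 0) * ∏ t : Fin n, A t.succ (y t.castSucc) (y t.succ) := by
  rw [Fin.prod_univ_succ]
  refine congrArg₂ (· * ·) rfl (Finset.prod_congr rfl fun t _ => ?_)
  rw [← Fin.succ_castSucc, Fin.cons_succ, Fin.cons_succ]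

lemma expand_head (n : ℕ) (v : Fin N → ℝ) (g : (Fin (n + 1) → Fin N) → ℝ)
    (Q : (Fin (n + 1) → Fin N) → Prop) [DecidablePred Q] :
    (∑ y : Fin (n + 1) → Fin N, if Q y then v (y 0) * g y else 0)
    = ∑ d : Fin N, v d * ∑ y : Fin (n + 1) → Fin N, if y 0 = d ∧ Q y then g y else 0 := by
  have h : ∀ d : Fin N, (v d * ∑ y : Fin (n + 1) → Fin N, if y 0 = d ∧ Q y then g y else 0)
      = ∑ y : Fin (n + 1) → Fin N, if y 0 = d ∧ Q y then v d * g y else 0 := by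
    intro d
    rw [Finset.mul_sum]
    exact Finset.sum_congr rfl fun y _ => by rw [mul_ite, mul_zero]
  simp only [h]
  rw [Finset.sum_comm]
  refine Finset.sum_congr rfl fun y _ => ?_
  by_cases hQ : Q y
  · simp [hQ]
  · simp [hQ]

lemma g3 : ∀ (n : ℕ) (A : Fin n → Matrix (Fin N) (Fin N) ℝ) (j : ℕ) (hj : j ≤ n)
    (a i b : Fin N),
    (∑ x : Fin (n + 1) → Fin N,
      if x 0 = a ∧ x ⟨j, Nat.lt_succ_of_le hj⟩ = i ∧ x (Fin.last n) = b
      then ∏ t : Fin n, A t (x t.castSucc) (x t.succ) else 0)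
    = Pfx n A j a i * Sfx n A j i b := by
  intro n
  induction n with
  | zero =>
    intro A j hj a i b
    interval_cases j
    rw [sum_decomp]
    have hsummand : ∀ (c : Fin N) (y : Fin 0 → Fin N),
        (if (Fin.cons c y : Fin 1 → Fin N) 0 = a
            ∧ (Fin.cons c y : Fin 1 → Fin N) ⟨0, Nat.lt_succ_of_le (le_refl 0)⟩ = i
            ∧ (Fin.cons c y : Fin 1 → Fin N) (Fin.last 0) = b
          then ∏ t : Fin 0, A t ((Fin.cons c y : Fin 1 → Fin N) t.castSucc)
            ((Fin.cons c y : Fin 1 → Fin N) t.succ) else 0)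
        = if c = a ∧ c = i ∧ c = b then 1 else 0 := by
      intro c y
      simp only [Finset.univ_eq_empty, Finset.prod_empty]
      rfl
    simp only [hsummand]
    have hinner : ∀ c : Fin N,
        (∑ _y : Fin 0 → Fin N, (if c = a ∧ c = i ∧ c = b then (1:ℝ) else 0))
        = if c = a ∧ c = i ∧ c = b then 1 else 0 := by
      intro c
      rw [Finset.sum_const]
      simp
    simp only [hinner]
    rw [Finset.sum_eq_single a]
    · simp only [Pfx, Sfx, Matrix.one_apply]
      split_ifs <;> simp_all
    · intro c _ hc
      rw [if_neg (fun h => hc h.1)]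
    · simp
  | succ n ih =>
    intro A j hj a i b
    rw [sum_decomp]
    cases j with
    | zero =>
      have hcond : ∀ (c : Fin N) (y : Fin (n + 1) → Fin N),
          ((Fin.cons c y : Fin (n + 2) → Fin N) 0 = a
            ∧ (Fin.cons c y : Fin (n + 2) → Fin N) ⟨0, Nat.lt_succ_of_le hj⟩ = i
            ∧ (Fin.cons c y : Fin (n + 2) → Fin N) (Fin.last (n + 1)) = b)
          ↔ (c = a ∧ c = i ∧ y (Fin.last n) = b) := fun c y => Iff.rfl
      simp only [hcond, prod_cons]
      by_cases hai : a = i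
      · subst hai
        rw [Finset.sum_eq_single a]
        · simp only [eq_self_iff_true, true_and, and_self]
          rw [expand_head n (fun d => A 0 a d)
            (fun y => ∏ t : Fin n, A t.succ (y t.castSucc) (y t.succ))
            (fun y => y (Fin.last n) = b)]
          have hdup : ∀ d : Fin N,
              (∑ y : Fin (n + 1) → Fin N,
                if y 0 = d ∧ y (Fin.last n) = b
                then ∏ t : Fin n, A t.succ (y t.castSucc) (y t.succ) else 0)
              = Sfx n (fun t => A t.succ) 0 d b := by
            intro d
            have h2 : (∑ y : Fin (n + 1) → Fin N,
                if y 0 = d ∧ y ⟨0, Nat.lt_succ_of_le (Nat.zero_le n)⟩ = d ∧ y (Fin.last n) = b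
                then ∏ t : Fin n, A t.succ (y t.castSucc) (y t.succ) else 0)
                = Pfx n (fun t => A t.succ) 0 d d * Sfx n (fun t => A t.succ) 0 d b :=
              ih (fun t => A t.succ) 0 (Nat.zero_le n) d d b
            rw [Pfx_zero, Matrix.one_apply, if_pos rfl, one_mul] at h2
            rw [← h2]
            refine Finset.sum_congr rfl fun y _ => ?_
            have h0 : ((⟨0, Nat.lt_succ_of_le (Nat.zero_le n)⟩ : Fin (n + 1))) = 0 := rfl
            rw [h0]
            by_cases h1 : y 0 = d <;> by_cases h3 : y (Fin.last n) = b <;> simp [h1, h3]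
          simp only [hdup]
          have hS : Sfx (n + 1) A 0 = A 0 * Sfx n (fun t => A t.succ) 0 := rfl
          rw [Pfx_zero, Matrix.one_apply, if_pos rfl, one_mul, hS, Matrix.mul_apply]
        · intro c _ hc
          exact Finset.sum_eq_zero fun y _ => if_neg (fun h => hc h.1)
        · simp
      · rw [Finset.sum_eq_zero (fun c _ =>
          Finset.sum_eq_zero fun y _ => if_neg (fun h => hai (h.1.symm.trans h.2.1)))]
        rw [Pfx_zero, Matrix.one_apply, if_neg hai, zero_mul]
    | succ j' =>
      have hj' : j' ≤ n := by omega
      have hcond : ∀ (c : Fin N) (y : Fin (n + 1) → Fin N),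
          ((Fin.cons c y : Fin (n + 2) → Fin N) 0 = a
            ∧ (Fin.cons c y : Fin (n + 2) → Fin N) ⟨j' + 1, Nat.lt_succ_of_le hj⟩ = i
            ∧ (Fin.cons c y : Fin (n + 2) → Fin N) (Fin.last (n + 1)) = b)
          ↔ (c = a ∧ y ⟨j', Nat.lt_succ_of_le hj'⟩ = i ∧ y (Fin.last n) = b) :=
        fun c y => Iff.rfl
      simp only [hcond, prod_cons]
      rw [Finset.sum_eq_single a]
      · simp only [eq_self_iff_true, true_and]
        rw [expand_head n (fun d => A 0 a d)
          (fun y => ∏ t : Fin n, A t.succ (y t.castSucc) (y t.succ))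
          (fun y => y ⟨j', Nat.lt_succ_of_le hj'⟩ = i ∧ y (Fin.last n) = b)]
        have hih : ∀ d : Fin N,
            (∑ y : Fin (n + 1) → Fin N,
              if y 0 = d ∧ y ⟨j', Nat.lt_succ_of_le hj'⟩ = i ∧ y (Fin.last n) = b
              then ∏ t : Fin n, A t.succ (y t.castSucc) (y t.succ) else 0)
            = Pfx n (fun t => A t.succ) j' d i * Sfx n (fun t => A t.succ) j' i b :=
          fun d => ih (fun t => A t.succ) j' hj' d i b
        simp only [hih]
        have h1 : Pfx (n + 1) A (j' + 1) = A 0 * Pfx n (fun t => A t.succ) j' := rfl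
        have h2 : Sfx (n + 1) A (j' + 1) = Sfx n (fun t => A t.succ) j' := rfl
        rw [h1, h2, Matrix.mul_apply, Finset.sum_mul]
        exact Finset.sum_congr rfl fun d _ => by ring
      · intro c _ hc
        exact Finset.sum_eq_zero fun y _ => if_neg (fun h => hc h.1)
      · simp

end PathAux

namespace PathAux2
open PathAux

variable {N : ℕ}

def Wm (K : Matrix (Fin N) (Fin N) ℝ) (u : ℕ → Fin N → ℝ) : ℕ → ℕ → Matrix (Fin N) (Fin N) ℝ
  | _, 0 => 1
  | s, c + 1 => Matrix.diagonal (u s) * K * Wm K u (s + 1) c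

lemma Wm_snoc (K : Matrix (Fin N) (Fin N) ℝ) (u : ℕ → Fin N → ℝ) :
    ∀ (c s : ℕ), Wm K u s c * (Matrix.diagonal (u (s + c)) * K) = Wm K u s (c + 1) := by
  intro c
  induction c with
  | zero => intro s; simp [Wm]
  | succ c ihc =>
    intro s
    have h1 : Wm K u s (c + 1) = Matrix.diagonal (u s) * K * Wm K u (s + 1) c := rfl
    have h2 : Wm K u s (c + 1 + 1) = Matrix.diagonal (u s) * K * Wm K u (s + 1) (c + 1) := rfl
    rw [h1, h2, ← ihc (s + 1), show s + (c + 1) = s + 1 + c by omega]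
    simp only [mul_assoc]

lemma Pfx_shift (K : Matrix (Fin N) (Fin N) ℝ) (u : ℕ → Fin N → ℝ) :
    ∀ (n s c : ℕ), c ≤ n →
      Pfx n (fun t : Fin n => Matrix.diagonal (u (s + (t : ℕ))) * K) c = Wm K u s c := by
  intro n
  induction n with
  | zero =>
    intro s c hc
    interval_cases c
    rw [Pfx_zero]; rfl
  | succ n ihn =>
    intro s c hc
    cases c with
    | zero => rw [Pfx_zero]; rfl
    | succ c =>
      have h1 : Pfx (n + 1) (fun t : Fin (n+1) => Matrix.diagonal (u (s + (t : ℕ))) * K) (c + 1)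
          = Matrix.diagonal (u (s + ((0 : Fin (n+1)) : ℕ))) * K
            * Pfx n (fun t : Fin n => Matrix.diagonal (u (s + ((t.succ : Fin (n+1)) : ℕ))) * K) c := rfl
      rw [h1]
      have h2 : (fun t : Fin n => Matrix.diagonal (u (s + ((t.succ : Fin (n+1)) : ℕ))) * K)
          = fun t : Fin n => Matrix.diagonal (u ((s + 1) + (t : ℕ))) * K := by
        funext t
        rw [Fin.val_succ, show s + ((t : ℕ) + 1) = (s + 1) + (t : ℕ) by omega]
      rw [h2, ihn (s + 1) c (by omega)]
      show Matrix.diagonal (u (s + 0)) * K * Wm K u (s + 1) c = Wm K u s (c + 1)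
      rw [show s + 0 = s by omega]
      rfl

lemma Sfx_shift (K : Matrix (Fin N) (Fin N) ℝ) (u : ℕ → Fin N → ℝ) :
    ∀ (n s j : ℕ), j ≤ n →
      Sfx n (fun t : Fin n => Matrix.diagonal (u (s + (t : ℕ))) * K) j = Wm K u (s + j) (n - j) := by
  intro n
  induction n with
  | zero =>
    intro s j hj
    interval_cases j
    rfl
  | succ n ihn =>
    intro s j hj
    have h2 : (fun t : Fin n => Matrix.diagonal (u (s + ((t.succ : Fin (n+1)) : ℕ))) * K)
        = fun t : Fin n => Matrix.diagonal (u ((s + 1) + (t : ℕ))) * K := by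
      funext t
      rw [Fin.val_succ, show s + ((t : ℕ) + 1) = (s + 1) + (t : ℕ) by omega]
    cases j with
    | zero =>
      have h1 : Sfx (n + 1) (fun t : Fin (n+1) => Matrix.diagonal (u (s + (t : ℕ))) * K) 0
          = Matrix.diagonal (u (s + ((0 : Fin (n+1)) : ℕ))) * K
            * Sfx n (fun t : Fin n => Matrix.diagonal (u (s + ((t.succ : Fin (n+1)) : ℕ))) * K) 0 := rfl
      rw [h1, h2, ihn (s + 1) 0 (by omega)]
      show Matrix.diagonal (u (s + 0)) * K * Wm K u (s + 1 + 0) (n - 0) = Wm K u (s + 0) (n + 1 - 0)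
      rw [show s + 0 = s by omega, show s + 1 + 0 = s + 1 by omega,
        show n - 0 = n by omega, show n + 1 - 0 = n + 1 by omega]
      rfl
    | succ j =>
      have h1 : Sfx (n + 1) (fun t : Fin (n+1) => Matrix.diagonal (u (s + (t : ℕ))) * K) (j + 1)
          = Sfx n (fun t : Fin n => Matrix.diagonal (u (s + ((t.succ : Fin (n+1)) : ℕ))) * K) j := rfl
      rw [h1, h2, ihn (s + 1) j (by omega),
        show s + 1 + j = s + (j + 1) by omega, show n - j = n + 1 - (j + 1) by omega]

end PathAux2

open PathAux PathAux2 in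
/-- Sinkhorn-type computation of the projections of the path-graph
structured tensor `K̂ ⊙ Û` (the modes are indexed `0, …, m`, i.e. `𝒯 = m + 1`):
`P_{0,m}(K̂ ⊙ Û) = U ⊙ Ψ_0` and
`P_j(K̂ ⊙ Û) = u_j ⊙ ((Ψ̂_jᵀ ⊙ (Ψ_j Uᵀ)) 𝟏)` for `j = 1, …, m-1`. -/
theorem path_graph_projections
    (N m : ℕ) (hm : 2 ≤ m) (ε : ℝ) (hε : 0 < ε)
    (C : Matrix (Fin N) (Fin N) EReal) (hC : ∀ i k, C i k ≠ ⊥)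
    (K : Matrix (Fin N) (Fin N) ℝ) (hK : ∀ i k, K i k = expNegE ε (C i k))
    (U : Matrix (Fin N) (Fin N) ℝ) (u : ℕ → Fin N → ℝ)
    (Khat Uhat : (Fin (m + 1) → Fin N) → ℝ)
    (hKhat : ∀ x, Khat x = ∏ t : Fin m, K (x t.castSucc) (x t.succ))
    (hUhat : ∀ x, Uhat x = U (x 0) (x (Fin.last m)) *
      ∏ t : Fin (m + 1), (if 0 < (t : ℕ) ∧ (t : ℕ) < m then u (t : ℕ) (x t) else 1))
    (hatPsi Psi : ℕ → Matrix (Fin N) (Fin N) ℝ)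
    (hhat1 : hatPsi 1 = K)
    (hhatrec : ∀ j : ℕ, 2 ≤ j → j ≤ m →
      hatPsi j = hatPsi (j - 1) * Matrix.diagonal (u (j - 1)) * K)
    (hpsiLast : Psi (m - 1) = K)
    (hpsirec : ∀ j : ℕ, j + 2 ≤ m →
      Psi j = K * Matrix.diagonal (u (j + 1)) * Psi (j + 1)) :
    (tbiproj (0 : Fin (m + 1)) (Fin.last m) (fun x => Khat x * Uhat x)
        = fun p => U p.1 p.2 * Psi 0 p.1 p.2) ∧
    ∀ j : Fin (m + 1), 0 < (j : ℕ) → (j : ℕ) < m →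
      tproj j (fun x => Khat x * Uhat x)
        = fun i => u (j : ℕ) i *
            ((((hatPsi (j : ℕ))ᵀ.hadamard (Psi (j : ℕ) * Uᵀ)).mulVec
              (fun _ => (1 : ℝ))) i) := by

  obtain ⟨n, rfl⟩ : ∃ n, m = n + 1 := ⟨m - 1, by omega⟩
  have hn : 1 ≤ n := by omega
  classical
  set A : Fin (n + 1) → Matrix (Fin N) (Fin N) ℝ :=
    fun t => if (t : ℕ) = 0 then K else Matrix.diagonal (u (t : ℕ)) * K with hA
  have hA0 : A 0 = K := by simp [hA]
  have hAtail : (fun t : Fin n => A t.succ)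
      = fun t : Fin n => Matrix.diagonal (u (1 + (t : ℕ))) * K := by
    funext t
    simp only [hA, Fin.val_succ]
    rw [if_neg (by omega), show (t : ℕ) + 1 = 1 + (t : ℕ) by omega]
  -- pointwise form of the tensor
  have hM : ∀ x : Fin (n + 2) → Fin N, Khat x * Uhat x
      = U (x 0) (x (Fin.last (n + 1))) *
        ∏ t : Fin (n + 1), A t (x t.castSucc) (x t.succ) := by
    intro x
    rw [hKhat, hUhat]
    rw [Fin.prod_univ_castSucc
      (f := fun t : Fin (n + 2) =>
        if 0 < (t : ℕ) ∧ (t : ℕ) < n + 1 then u (t : ℕ) (x t) else 1)]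
    rw [if_neg (by simp [Fin.last])]
    rw [mul_one]
    have hprod : (∏ t : Fin (n + 1), K (x t.castSucc) (x t.succ)) *
        (∏ t : Fin (n + 1),
          if 0 < ((t.castSucc : Fin (n + 2)) : ℕ) ∧ ((t.castSucc : Fin (n + 2)) : ℕ) < n + 1
          then u ((t.castSucc : Fin (n + 2)) : ℕ) (x t.castSucc) else 1)
        = ∏ t : Fin (n + 1), A t (x t.castSucc) (x t.succ) := by
      rw [← Finset.prod_mul_distrib]
      refine Finset.prod_congr rfl fun t _ => ?_
      have hcs : ((t.castSucc : Fin (n + 2)) : ℕ) = (t : ℕ) := rfl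
      by_cases ht : (t : ℕ) = 0
      · rw [hcs, if_neg (by omega)]
        simp [hA, ht, (Fin.ext ht : t = 0)]
      · rw [hcs, if_pos ⟨by omega, t.isLt⟩]
        simp only [hA, if_neg ht, Matrix.diagonal_mul]
        ring
    rw [← hprod]
    ring
  -- formulas for Psi and hatPsi
  have psi_d : ∀ d : ℕ, d ≤ n → Psi (n - d) = K * Wm K u (n + 1 - d) d := by
    intro d
    induction d with
    | zero =>
      intro _
      have h0 : Psi n = K := by
        have : n + 1 - 1 = n := by omega
        rw [← this]; exact hpsiLast
      rw [Nat.sub_zero, Nat.sub_zero, h0]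
      show K = K * Wm K u (n + 1) 0
      rw [show Wm K u (n + 1) 0 = 1 from rfl, mul_one]
    | succ d ihd =>
      intro hd
      have hrec := hpsirec (n - (d + 1)) (by omega)
      rw [show n - (d + 1) + 1 = n - d by omega] at hrec
      rw [hrec, ihd (by omega)]
      rw [show n + 1 - (d + 1) = n - d by omega]
      have : Wm K u (n - d) (d + 1)
          = Matrix.diagonal (u (n - d)) * K * Wm K u (n - d + 1) d := rfl
      rw [this, show n - d + 1 = n + 1 - d by omega]
      simp only [mul_assoc]
  have hPsi : ∀ j : ℕ, j ≤ n → Psi j = K * Wm K u (j + 1) (n - j) := by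
    intro j hj
    have := psi_d (n - j) (by omega)
    rw [show n - (n - j) = j by omega, show n + 1 - (n - j) = j + 1 by omega] at this
    exact this
  have hHat : ∀ j : ℕ, 1 ≤ j → j ≤ n + 1 → hatPsi j = K * Wm K u 1 (j - 1) := by
    intro j h1
    induction j, h1 using Nat.le_induction with
    | base =>
      intro _
      rw [hhat1, show (1 : ℕ) - 1 = 0 from rfl,
        show Wm K u 1 0 = 1 from rfl, mul_one]
    | succ j hj ihj =>
      intro hle
      rw [hhatrec (j + 1) (by omega) hle, show j + 1 - 1 = j from rfl,
        ihj (by omega)]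
      have hs := Wm_snoc K u (j - 1) 1
      rw [show 1 + (j - 1) = j by omega, show j - 1 + 1 = j by omega] at hs
      rw [mul_assoc, mul_assoc, hs]
  have hPfxA : ∀ j : ℕ, 1 ≤ j → j ≤ n + 1 → Pfx (n + 1) A j = hatPsi j := by
    intro j h1 h2
    obtain ⟨j', rfl⟩ : ∃ j', j = j' + 1 := ⟨j - 1, by omega⟩
    have hstep : Pfx (n + 1) A (j' + 1) = A 0 * Pfx n (fun t => A t.succ) j' := rfl
    rw [hstep, hAtail, Pfx_shift K u n 1 j' (by omega), hA0,
      hHat (j' + 1) (by omega) h2, show j' + 1 - 1 = j' from rfl]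
  have hSfxA0 : Sfx (n + 1) A 0 = Psi 0 := by
    have hstep : Sfx (n + 1) A 0 = A 0 * Sfx n (fun t => A t.succ) 0 := rfl
    rw [hstep, hAtail, Sfx_shift K u n 1 0 (by omega), hA0, hPsi 0 (by omega)]
  have hSfxA : ∀ j : ℕ, 1 ≤ j → j ≤ n →
      Sfx (n + 1) A j = Matrix.diagonal (u j) * Psi j := by
    intro j h1 h2
    obtain ⟨j', rfl⟩ : ∃ j', j = j' + 1 := ⟨j - 1, by omega⟩
    have hstep : Sfx (n + 1) A (j' + 1) = Sfx n (fun t => A t.succ) j' := rfl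
    rw [hstep, hAtail, Sfx_shift K u n 1 j' (by omega), hPsi (j' + 1) h2]
    rw [show 1 + j' = j' + 1 by omega, show n - j' = (n - (j' + 1)) + 1 by omega]
    show Matrix.diagonal (u (j' + 1)) * K * Wm K u (j' + 1 + 1) (n - (j' + 1)) = _
    rw [mul_assoc]
  refine ⟨?_, ?_⟩
  · funext p
    show (∑ x : Fin (n + 2) → Fin N,
        if x 0 = p.1 ∧ x (Fin.last (n + 1)) = p.2 then Khat x * Uhat x else 0)
      = U p.1 p.2 * Psi 0 p.1 p.2
    have e1 : ∀ x : Fin (n + 2) → Fin N,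
        (if x 0 = p.1 ∧ x (Fin.last (n + 1)) = p.2 then Khat x * Uhat x else 0)
        = U p.1 p.2 *
          (if x 0 = p.1 ∧ x ⟨0, Nat.lt_succ_of_le (Nat.zero_le (n + 1))⟩ = p.1
              ∧ x (Fin.last (n + 1)) = p.2
            then ∏ t : Fin (n + 1), A t (x t.castSucc) (x t.succ) else 0) := by
      intro x
      by_cases h : x 0 = p.1 ∧ x (Fin.last (n + 1)) = p.2
      · rw [if_pos h, if_pos ⟨h.1, h.1, h.2⟩, hM x, h.1, h.2]
      · rw [if_neg h, if_neg (fun hh => h ⟨hh.1, hh.2.2⟩), mul_zero]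
    simp only [e1]
    rw [← Finset.mul_sum, g3 (n + 1) A 0 (Nat.zero_le (n + 1)) p.1 p.1 p.2,
      Pfx_zero, Matrix.one_apply, if_pos rfl, one_mul, hSfxA0]
  · intro j hj0 hjm
    funext i
    have hjle : (j : ℕ) ≤ n + 1 := by omega
    show (∑ x : Fin (n + 2) → Fin N, if x j = i then Khat x * Uhat x else 0)
      = u (j : ℕ) i *
          ((((hatPsi (j : ℕ))ᵀ.hadamard (Psi (j : ℕ) * Uᵀ)).mulVec (fun _ => (1 : ℝ))) i)
    have step : ∀ x : Fin (n + 2) → Fin N,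
        (if x j = i then Khat x * Uhat x else 0)
        = ∑ a : Fin N, ∑ b : Fin N,
            if x 0 = a ∧ x ⟨(j : ℕ), Nat.lt_succ_of_le hjle⟩ = i ∧ x (Fin.last (n + 1)) = b
            then U a b * ∏ t : Fin (n + 1), A t (x t.castSucc) (x t.succ) else 0 := by
      intro x
      have hjx : (⟨(j : ℕ), Nat.lt_succ_of_le hjle⟩ : Fin (n + 2)) = j := rfl
      rw [hM x]
      symm
      rw [Finset.sum_eq_single (x 0)]
      · rw [Finset.sum_eq_single (x (Fin.last (n + 1)))]
        · by_cases h : x j = i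
          · rw [if_pos ⟨rfl, by rw [hjx]; exact h, rfl⟩, if_pos h]
          · rw [if_neg (fun hh => h (by rw [← hjx]; exact hh.2.1)), if_neg h]
        · intro b _ hb
          exact if_neg (fun hh => hb hh.2.2.symm)
        · simp
      · intro a _ ha
        exact Finset.sum_eq_zero fun b _ => if_neg (fun hh => ha hh.1.symm)
      · simp
    simp only [step]
    rw [Finset.sum_comm]
    have hswap : ∀ a : Fin N, (∑ x : Fin (n + 2) → Fin N, ∑ b : Fin N,
        (if x 0 = a ∧ x ⟨(j : ℕ), Nat.lt_succ_of_le hjle⟩ = i ∧ x (Fin.last (n + 1)) = b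
          then U a b * ∏ t : Fin (n + 1), A t (x t.castSucc) (x t.succ) else 0))
        = ∑ b : Fin N, ∑ x : Fin (n + 2) → Fin N,
        (if x 0 = a ∧ x ⟨(j : ℕ), Nat.lt_succ_of_le hjle⟩ = i ∧ x (Fin.last (n + 1)) = b
          then U a b * ∏ t : Fin (n + 1), A t (x t.castSucc) (x t.succ) else 0) :=
      fun a => Finset.sum_comm
    simp only [hswap]
    have hinner : ∀ (a b : Fin N),
        (∑ x : Fin (n + 2) → Fin N,
          if x 0 = a ∧ x ⟨(j : ℕ), Nat.lt_succ_of_le hjle⟩ = i ∧ x (Fin.last (n + 1)) = b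
          then U a b * ∏ t : Fin (n + 1), A t (x t.castSucc) (x t.succ) else 0)
        = U a b * (hatPsi (j : ℕ) a i * (u (j : ℕ) i * Psi (j : ℕ) i b)) := by
      intro a b
      have hpull : (∑ x : Fin (n + 2) → Fin N,
          if x 0 = a ∧ x ⟨(j : ℕ), Nat.lt_succ_of_le hjle⟩ = i ∧ x (Fin.last (n + 1)) = b
          then U a b * ∏ t : Fin (n + 1), A t (x t.castSucc) (x t.succ) else 0)
          = U a b * ∑ x : Fin (n + 2) → Fin N,
            (if x 0 = a ∧ x ⟨(j : ℕ), Nat.lt_succ_of_le hjle⟩ = i ∧ x (Fin.last (n + 1)) = b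
            then ∏ t : Fin (n + 1), A t (x t.castSucc) (x t.succ) else 0) := by
        rw [Finset.mul_sum]
        exact Finset.sum_congr rfl fun x _ => by rw [mul_ite, mul_zero]
      rw [hpull, g3 (n + 1) A (j : ℕ) hjle a i b,
        hPfxA (j : ℕ) (by omega) hjle, hSfxA (j : ℕ) (by omega) (by omega),
        Matrix.diagonal_mul]
    simp only [hinner]
    simp only [Matrix.mulVec, dotProduct, Matrix.hadamard_apply,
      Matrix.transpose_apply, Matrix.mul_apply, mul_one]
    simp only [Finset.mul_sum]
    exact Finset.sum_congr rfl fun a _ => Finset.sum_congr rfl fun b _ => by ring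
end
end

section
/- Let ε > 0, let C ∈ (ℝ ∪ {+∞})^{N×N} and set K = exp(−C/ε) elementwise. Consider (𝒯+2)-mode tensors indexed by (ℓ, i_0, i_1, …, i_𝒯) with ℓ ∈ Fin L and i_j ∈ Fin N, and define K̂(ℓ, i_0,…,i_𝒯) = Π_{t=0}^{𝒯−1} K_{i_t, i_{t+1}} and Û(ℓ, i_0,…,i_𝒯) = U_{−1,0}(ℓ, i_0) · Π_{j=1}^{𝒯} U_{−1,j}(ℓ, i_j) · Π_{j=1}^{𝒯} u_j(i_j), where U_{−1,j} ∈ ℝ^{L×N} for j = 0,…,𝒯 and u_j ∈ ℝ^N for j = 1,…,𝒯. Define L×N matrices Ψ̂_1 = U_{−1,0} K; Ψ̂_j = (Ψ̂_{j−1} ⊙ U_{−1,j−1}) diag(u_{j−1}) K for j = 2,…,𝒯; Ψ_{𝒯−1} = U_{−1,𝒯} diag(u_𝒯) K^T; Ψ_j = (Ψ_{j+1} ⊙ U_{−1,j+1}) diag(u_{j+1}) K^T for j = 0,…,𝒯−2. Then the bimarginal projections of K̂ ⊙ Û onto the species mode (mode −1) and the time modes satisfy: P_{−1,0}(K̂ ⊙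 Û) = U_{−1,0} ⊙ Ψ_0; P_{−1,j}(K̂ ⊙ Û) = Ψ̂_j ⊙ Ψ_j ⊙ (U_{−1,j} diag(u_j)) for j = 1,…,𝒯−1; and P_{−1,𝒯}(K̂ ⊙ Û) = (U_{−1,𝒯} diag(u_𝒯)) ⊙ Ψ̂_𝒯. -/
open scoped BigOperators
open Filter Matrix

noncomputable section

namespace MSAux

variable {N : ℕ}

def Fwd (K : Matrix (Fin N) (Fin N) ℝ) (W : ℕ → Fin N → ℝ) : ℕ → Fin N → ℝ
  | 0 => fun _ => 1
  | j + 1 => fun i => ∑ k, Fwd K W j k * W j k * K k i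

def Bwd (K : Matrix (Fin N) (Fin N) ℝ) (W : ℕ → Fin N → ℝ) (m : ℕ) : ℕ → Fin N → ℝ
  | 0 => fun _ => 1
  | d + 1 => fun i => ∑ k, K i k * W (m - d) k * Bwd K W m d k

lemma Fwd_congr (K : Matrix (Fin N) (Fin N) ℝ) {W W' : ℕ → Fin N → ℝ} :
    ∀ (j : ℕ), (∀ t < j, W t = W' t) → Fwd K W j = Fwd K W' j
  | 0, _ => rfl
  | j + 1, h => by
      have ih := Fwd_congr K j (fun t ht => h t (Nat.lt_succ_of_lt ht))
      funext i
      simp only [Fwd, ih, h j (Nat.lt_succ_self j)]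

lemma Bwd_update (K : Matrix (Fin N) (Fin N) ℝ) (W : ℕ → Fin N → ℝ) (m : ℕ) :
    ∀ d : ℕ, 1 ≤ d → d ≤ m →
      Bwd K W (m + 1) (d + 1) =
      Bwd K (Function.update W m (fun k => W m k * ∑ a, K k a * W (m + 1) a)) m d := by
  intro d
  induction d with
  | zero => intro h; omega
  | succ d ih =>
    intro _ hdm
    rcases Nat.eq_zero_or_pos d with hd0 | hd1
    · subst hd0
      funext i
      show (∑ k, K i k * W (m + 1 - 1) k * Bwd K W (m+1) 1 k)
          = ∑ k, K i k * (Function.update W m (fun k => W m k * ∑ a, K k a * W (m + 1) a)) (m - 0) k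
              * Bwd K _ m 0 k
      refine Finset.sum_congr rfl fun k _ => ?_
      show K i k * W (m + 1 - 1) k * (∑ a, K k a * W (m+1-0) a * Bwd K W (m+1) 0 a) = _
      simp only [Bwd, Nat.add_sub_cancel, Nat.sub_zero, Function.update_self, mul_one]
      ring
    · have ih' := ih hd1 (by omega)
      funext i
      show (∑ k, K i k * W (m + 1 - (d+1)) k * Bwd K W (m+1) (d+1) k)
          = ∑ k, K i k * (Function.update W m (fun k => W m k * ∑ a, K k a * W (m + 1) a)) (m - d) k
              * Bwd K _ m d k
      rw [ih']
      refine Finset.sum_congr rfl fun k _ => ?_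
      have h1 : m + 1 - (d + 1) = m - d := by omega
      have h2 : m - d ≠ m := by omega
      rw [h1, Function.update_of_ne h2]

lemma sum_snoc {α : Type*} [AddCommMonoid α] {n : ℕ} (f : (Fin (n + 1) → Fin N) → α) :
    ∑ x : Fin (n + 1) → Fin N, f x
      = ∑ y : Fin n → Fin N, ∑ a : Fin N, f (Fin.snoc y a) := by
  rw [← (Fin.snocEquiv (fun _ => Fin N)).sum_comp f, Fintype.sum_prod_type]
  rw [Finset.sum_comm]
  rfl

lemma prodW_snoc {m : ℕ} (W : ℕ → Fin N → ℝ) (y : Fin (m + 1) → Fin N) (a : Fin N) :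
    (∏ t : Fin (m + 2), W (t : ℕ) ((Fin.snoc y a : Fin (m+2) → Fin N) t))
      = (∏ t : Fin (m + 1), W (t : ℕ) (y t)) * W (m + 1) a := by
  rw [Fin.prod_univ_castSucc]
  simp

lemma prodK_snoc {m : ℕ} (K : Matrix (Fin N) (Fin N) ℝ) (y : Fin (m + 1) → Fin N) (a : Fin N) :
    (∏ t : Fin (m + 1), K ((Fin.snoc y a : Fin (m+2) → Fin N) t.castSucc)
        ((Fin.snoc y a : Fin (m+2) → Fin N) t.succ))
      = (∏ t : Fin m, K (y t.castSucc) (y t.succ)) * K (y (Fin.last m)) a := by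
  rw [Fin.prod_univ_castSucc]
  congr 1
  · refine Finset.prod_congr rfl fun t _ => ?_
    rw [Fin.succ_castSucc]
    simp only [Fin.snoc_castSucc]
  · simp [Fin.succ_last]

lemma prodW_update {m : ℕ} (W : ℕ → Fin N → ℝ) (g : Fin N → ℝ) (y : Fin (m + 1) → Fin N) :
    (∏ t : Fin (m + 1), (Function.update W m (fun k => W m k * g k)) (t : ℕ) (y t))
      = (∏ t : Fin (m + 1), W (t : ℕ) (y t)) * g (y (Fin.last m)) := by
  rw [Fin.prod_univ_castSucc, Fin.prod_univ_castSucc (f := fun t : Fin (m+1) => W (t : ℕ) (y t))]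
  have h1 : ∀ t : Fin m, (Function.update W m (fun k => W m k * g k)) ((t.castSucc : Fin (m+1)) : ℕ) (y t.castSucc)
      = W ((t.castSucc : Fin (m+1)) : ℕ) (y t.castSucc) := by
    intro t
    rw [Function.update_of_ne]
    simp only [Fin.coe_castSucc]
    omega
  rw [Finset.prod_congr rfl (fun t _ => h1 t)]
  have h2 : (Function.update W m (fun k => W m k * g k)) ((Fin.last m : Fin (m+1)) : ℕ) (y (Fin.last m))
      = W m (y (Fin.last m)) * g (y (Fin.last m)) := by
    simp [Fin.val_last]
  rw [h2]
  simp only [Fin.val_last]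
  ring

lemma path_marginal (K : Matrix (Fin N) (Fin N) ℝ) :
    ∀ (m : ℕ) (W : ℕ → Fin N → ℝ) (j : ℕ) (hj : j ≤ m) (i : Fin N),
    (∑ x : Fin (m + 1) → Fin N,
      if x ⟨j, Nat.lt_succ_of_le hj⟩ = i then
        (∏ t : Fin (m + 1), W (t : ℕ) (x t)) * ∏ t : Fin m, K (x t.castSucc) (x t.succ)
      else 0)
    = Fwd K W j i * W j i * Bwd K W m (m - j) i := by
  intro m
  induction m with
  | zero =>
    intro W j hj i
    interval_cases j
    rw [sum_snoc]
    simp [Fwd, Bwd, Fin.snoc]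
  | succ m ih =>
    intro W j hj i
    rw [sum_snoc]
    by_cases hjm : j ≤ m
    · -- constraint is on the `y` part
      have step : ∀ (y : Fin (m + 1) → Fin N),
          (∑ a : Fin N,
            if (Fin.snoc y a : Fin (m+2) → Fin N) ⟨j, Nat.lt_succ_of_le hj⟩ = i then
              (∏ t : Fin (m + 2), W (t : ℕ) ((Fin.snoc y a : Fin (m+2) → Fin N) t)) *
                ∏ t : Fin (m + 1), K ((Fin.snoc y a : Fin (m+2) → Fin N) t.castSucc)
                  ((Fin.snoc y a : Fin (m+2) → Fin N) t.succ)
            else 0)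
          = (if y ⟨j, Nat.lt_succ_of_le hjm⟩ = i then
              (∏ t : Fin (m + 1),
                (Function.update W m (fun k => W m k * ∑ a, K k a * W (m + 1) a)) (t : ℕ) (y t)) *
                ∏ t : Fin m, K (y t.castSucc) (y t.succ)
            else 0) := by
        intro y
        have hcond : ∀ a, (Fin.snoc y a : Fin (m+2) → Fin N) ⟨j, Nat.lt_succ_of_le hj⟩
            = y ⟨j, Nat.lt_succ_of_le hjm⟩ := by
          intro a
          have : (⟨j, Nat.lt_succ_of_le hj⟩ : Fin (m+2))
              = Fin.castSucc ⟨j, Nat.lt_succ_of_le hjm⟩ := rfl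
          rw [this, Fin.snoc_castSucc]
        simp only [hcond]
        by_cases hc : y ⟨j, Nat.lt_succ_of_le hjm⟩ = i
        · simp only [if_pos hc, prodW_snoc, prodK_snoc]
          rw [prodW_update]
          rw [mul_assoc, Finset.sum_mul, Finset.mul_sum]
          refine Finset.sum_congr rfl fun a _ => ?_
          ring
        · simp [hc]
      rw [Finset.sum_congr rfl (fun y _ => step y)]
      rw [ih _ j hjm i]
      set W' := Function.update W m (fun k => W m k * ∑ a, K k a * W (m + 1) a) with hW'
      have hF : Fwd K W' j = Fwd K W j := by
        refine Fwd_congr K j fun t ht => ?_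
        rw [hW', Function.update_of_ne (by omega)]
      rw [hF]
      by_cases hjm2 : j = m
      · rw [hjm2]
        simp only [Nat.sub_self]
        have h1 : m + 1 - m = 1 := by omega
        rw [h1]
        show Fwd K W m i * W' m i * 1 = Fwd K W m i * W m i *
          (∑ k, K i k * W (m + 1 - 0) k * Bwd K W (m+1) 0 k)
        simp only [hW', Function.update_self, Nat.sub_zero, Bwd, mul_one]
        ring
      · have hd1 : 1 ≤ m - j := by omega
        have hd2 : m - j ≤ m := by omega
        have h1 : m + 1 - j = (m - j) + 1 := by omega
        rw [h1, Bwd_update K W m (m - j) hd1 hd2, ← hW']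
        rw [hW', Function.update_of_ne (by omega)]
    · -- j = m + 1 : constraint on the last coordinate
      have hj1 : j = m + 1 := by omega
      subst hj1
      have hlast : (⟨m + 1, Nat.lt_succ_of_le hj⟩ : Fin (m + 2)) = Fin.last (m + 1) := rfl
      have step : ∀ (y : Fin (m + 1) → Fin N),
          (∑ a : Fin N,
            if (Fin.snoc y a : Fin (m+2) → Fin N) ⟨m + 1, Nat.lt_succ_of_le hj⟩ = i then
              (∏ t : Fin (m + 2), W (t : ℕ) ((Fin.snoc y a : Fin (m+2) → Fin N) t)) *
                ∏ t : Fin (m + 1), K ((Fin.snoc y a : Fin (m+2) → Fin N) t.castSucc)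
                  ((Fin.snoc y a : Fin (m+2) → Fin N) t.succ)
            else 0)
          = ∑ k : Fin N,
              (if y ⟨m, Nat.lt_succ_of_le le_rfl⟩ = k then
                (∏ t : Fin (m + 1), W (t : ℕ) (y t)) * ∏ t : Fin m, K (y t.castSucc) (y t.succ)
               else 0) * (K k i * W (m + 1) i) := by
        intro y
        have h1 : ∀ a : Fin N, ((Fin.snoc y a : Fin (m+2) → Fin N) ⟨m + 1, Nat.lt_succ_of_le hj⟩) = a := by
          intro a; rw [hlast, Fin.snoc_last]
        simp only [h1, prodW_snoc, prodK_snoc]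
        rw [Finset.sum_ite_eq' Finset.univ i]
        simp only [Finset.mem_univ, if_true]
        have h2 : ∀ k : Fin N,
            (if y ⟨m, Nat.lt_succ_of_le le_rfl⟩ = k then
                (∏ t : Fin (m + 1), W (t : ℕ) (y t)) * ∏ t : Fin m, K (y t.castSucc) (y t.succ)
             else 0) * (K k i * W (m + 1) i)
            = (if y ⟨m, Nat.lt_succ_of_le le_rfl⟩ = k then
                ((∏ t : Fin (m + 1), W (t : ℕ) (y t)) * ∏ t : Fin m, K (y t.castSucc) (y t.succ))
                  * (K k i * W (m + 1) i)
               else 0) := by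
          intro k
          rw [ite_mul, zero_mul]
        rw [Finset.sum_congr rfl fun k _ => h2 k, Finset.sum_ite_eq Finset.univ]
        simp only [Finset.mem_univ, if_true]
        have h3 : y ⟨m, Nat.lt_succ_of_le le_rfl⟩ = y (Fin.last m) := rfl
        rw [h3]
        ring
      rw [Finset.sum_congr rfl (fun y _ => step y)]
      rw [Finset.sum_comm]
      have h4 : ∀ k : Fin N,
          (∑ y : Fin (m + 1) → Fin N,
            (if y ⟨m, Nat.lt_succ_of_le le_rfl⟩ = k then
              (∏ t : Fin (m + 1), W (t : ℕ) (y t)) * ∏ t : Fin m, K (y t.castSucc) (y t.succ)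
             else 0) * (K k i * W (m + 1) i))
          = (Fwd K W m k * W m k * Bwd K W m 0 k) * (K k i * W (m + 1) i) := by
        intro k
        rw [← Finset.sum_mul, ih W m le_rfl k]
        simp
      rw [Finset.sum_congr rfl fun k _ => h4 k]
      have h5 : m + 1 - (m + 1) = 0 := by omega
      rw [h5]
      show _ = (∑ k, Fwd K W m k * W m k * K k i) * W (m + 1) i * Bwd K W (m+1) 0 i
      simp only [Bwd, mul_one, Finset.sum_mul]
      refine Finset.sum_congr rfl fun k _ => ?_
      ring

end MSAux

/-- The bimarginal projection of a multi-species tensor onto the species mode and the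
time mode `j`: `(P_{-1,j}(M))_{ℓ,i} = ∑_{x : x j = i} M(ℓ, x)`. -/
def msBiproj {L m N : ℕ} (j : Fin (m + 1)) (M : Fin L × (Fin (m + 1) → Fin N) → ℝ) :
    Matrix (Fin L) (Fin N) ℝ :=
  Matrix.of fun ℓ i => ∑ x : Fin (m + 1) → Fin N, if x j = i then M (ℓ, x) else 0

/-- The marginal projection of a multi-species tensor onto the time mode `j`. -/
def msProj {L m N : ℕ} (j : Fin (m + 1)) (M : Fin L × (Fin (m + 1) → Fin N) → ℝ) :
    Fin N → ℝ :=
  fun i => ∑ ℓ : Fin L, ∑ x : Fin (m + 1) → Fin N, if x j = i then M (ℓ, x) else 0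

/-- Sinkhorn-type computation of the species-time bimarginal
projections of the multi-species tensor `K̂ ⊙ Û`. -/
theorem multispecies_bimarginal_projections
    (L N m : ℕ) (hm : 1 ≤ m) (ε : ℝ) (hε : 0 < ε)
    (C : Matrix (Fin N) (Fin N) EReal) (hC : ∀ i k, C i k ≠ ⊥)
    (K : Matrix (Fin N) (Fin N) ℝ) (hK : ∀ i k, K i k = expNegE ε (C i k))
    (Um : ℕ → Matrix (Fin L) (Fin N) ℝ) (u : ℕ → Fin N → ℝ)
    (Khat Uhat : Fin L × (Fin (m + 1) → Fin N) → ℝ)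
    (hKhat : ∀ ℓ x, Khat (ℓ, x) = ∏ t : Fin m, K (x t.castSucc) (x t.succ))
    (hUhat : ∀ ℓ x, Uhat (ℓ, x) = Um 0 ℓ (x 0) *
      ∏ t : Fin m, (Um ((t : ℕ) + 1) ℓ (x t.succ) * u ((t : ℕ) + 1) (x t.succ)))
    (hatPsi Psi : ℕ → Matrix (Fin L) (Fin N) ℝ)
    (hhat1 : hatPsi 1 = Um 0 * K)
    (hhatrec : ∀ j : ℕ, 2 ≤ j → j ≤ m →
      hatPsi j = ((hatPsi (j - 1)).hadamard (Um (j - 1))) * Matrix.diagonal (u (j - 1)) * K)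
    (hpsiLast : Psi (m - 1) = Um m * Matrix.diagonal (u m) * Kᵀ)
    (hpsirec : ∀ j : ℕ, j + 2 ≤ m →
      Psi j = ((Psi (j + 1)).hadamard (Um (j + 1))) * Matrix.diagonal (u (j + 1)) * Kᵀ)
    :
    (msBiproj (0 : Fin (m + 1)) (fun p => Khat p * Uhat p) = (Um 0).hadamard (Psi 0)) ∧
    (∀ j : Fin (m + 1), 0 < (j : ℕ) → (j : ℕ) < m →
      msBiproj j (fun p => Khat p * Uhat p)
        = ((hatPsi (j : ℕ)).hadamard (Psi (j : ℕ))).hadamard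
            (Um (j : ℕ) * Matrix.diagonal (u (j : ℕ)))) ∧
    (msBiproj (Fin.last m) (fun p => Khat p * Uhat p)
        = (Um m * Matrix.diagonal (u m)).hadamard (hatPsi m)) := by

  classical
  set W : Fin L → ℕ → Fin N → ℝ :=
    fun ℓ t => if t = 0 then fun i => Um 0 ℓ i else fun i => Um t ℓ i * u t i with hWdef
  have hWpos : ∀ ℓ t, t ≠ 0 → W ℓ t = fun i => Um t ℓ i * u t i := by
    intro ℓ t ht; simp [hWdef, ht]
  have hprod : ∀ ℓ (x : Fin (m+1) → Fin N),
      Khat (ℓ, x) * Uhat (ℓ, x)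
        = (∏ t : Fin (m+1), W ℓ (t : ℕ) (x t)) * ∏ t : Fin m, K (x t.castSucc) (x t.succ) := by
    intro ℓ x
    rw [hKhat, hUhat, Fin.prod_univ_succ]
    have h1 : W ℓ ((0 : Fin (m+1)) : ℕ) (x 0) = Um 0 ℓ (x 0) := rfl
    have h2 : ∀ t : Fin m, W ℓ ((t.succ : Fin (m+1)) : ℕ) (x t.succ)
        = Um ((t:ℕ)+1) ℓ (x t.succ) * u ((t:ℕ)+1) (x t.succ) := by
      intro t
      rw [Fin.val_succ]
      exact congrFun (hWpos ℓ ((t:ℕ)+1) (Nat.succ_ne_zero _)) _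
    rw [h1, Finset.prod_congr rfl (fun t _ => h2 t)]
    ring
  have key : ∀ (ℓ : Fin L) (j : Fin (m+1)) (i : Fin N),
      msBiproj j (fun p => Khat p * Uhat p) ℓ i
        = MSAux.Fwd K (W ℓ) (j:ℕ) i * W ℓ (j:ℕ) i * MSAux.Bwd K (W ℓ) m (m - (j:ℕ)) i := by
    intro ℓ j i
    have hj : (j:ℕ) ≤ m := Nat.lt_succ_iff.mp j.isLt
    have hpm := MSAux.path_marginal K m (W ℓ) (j:ℕ) hj i
    rw [show (⟨(j:ℕ), Nat.lt_succ_of_le hj⟩ : Fin (m+1)) = j from rfl] at hpm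
    rw [← hpm]
    simp only [msBiproj, Matrix.of_apply]
    refine Finset.sum_congr rfl fun x _ => ?_
    rw [hprod ℓ x]
  have hatPsi_eq : ∀ j : ℕ, 1 ≤ j → j ≤ m → ∀ ℓ i, hatPsi j ℓ i = MSAux.Fwd K (W ℓ) j i := by
    intro j
    induction j with
    | zero => intro h; omega
    | succ j ihj =>
      intro _ hjm ℓ i
      rcases Nat.eq_zero_or_pos j with h0 | h1
      · subst h0
        rw [hhat1, Matrix.mul_apply]
        show _ = ∑ k, MSAux.Fwd K (W ℓ) 0 k * W ℓ 0 k * K k i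
        refine Finset.sum_congr rfl fun k _ => ?_
        show Um 0 ℓ k * K k i = 1 * W ℓ 0 k * K k i
        simp [hWdef]
      · rw [hhatrec (j+1) (by omega) hjm]
        simp only [Nat.add_sub_cancel]
        rw [Matrix.mul_apply]
        show _ = ∑ k, MSAux.Fwd K (W ℓ) j k * W ℓ j k * K k i
        refine Finset.sum_congr rfl fun k _ => ?_
        rw [Matrix.mul_diagonal, Matrix.hadamard_apply, ihj h1 (by omega) ℓ k,
          hWpos ℓ j (by omega)]
        ring
  have Psi_eq : ∀ d : ℕ, 1 ≤ d → d ≤ m → ∀ ℓ i, Psi (m - d) ℓ i = MSAux.Bwd K (W ℓ) m d i := by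
    intro d
    induction d with
    | zero => intro h; omega
    | succ d ihd =>
      intro _ hdm ℓ i
      rcases Nat.eq_zero_or_pos d with h0 | h1
      · subst h0
        rw [hpsiLast, Matrix.mul_apply]
        show _ = ∑ k, K i k * W ℓ (m - 0) k * MSAux.Bwd K (W ℓ) m 0 k
        refine Finset.sum_congr rfl fun k _ => ?_
        rw [Matrix.mul_diagonal, Matrix.transpose_apply, Nat.sub_zero,
          hWpos ℓ m (by omega)]
        show Um m ℓ k * u m k * K i k = K i k * (Um m ℓ k * u m k) * 1
        ring
      · have hrec := hpsirec (m - (d+1)) (by omega)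
        have heq : m - (d+1) + 1 = m - d := by omega
        rw [heq] at hrec
        rw [hrec, Matrix.mul_apply]
        show _ = ∑ k, K i k * W ℓ (m - d) k * MSAux.Bwd K (W ℓ) m d k
        refine Finset.sum_congr rfl fun k _ => ?_
        rw [Matrix.mul_diagonal, Matrix.transpose_apply, Matrix.hadamard_apply,
          ihd h1 (by omega) ℓ k, hWpos ℓ (m - d) (by omega)]
        ring
  refine ⟨?_, ?_, ?_⟩
  · ext ℓ i
    rw [key ℓ 0 i]
    have h0 : ((0 : Fin (m+1)) : ℕ) = 0 := rfl
    rw [h0, Nat.sub_zero]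
    have hP := Psi_eq m hm le_rfl ℓ i
    rw [Nat.sub_self] at hP
    rw [Matrix.hadamard_apply, hP]
    show 1 * W ℓ 0 i * MSAux.Bwd K (W ℓ) m m i = Um 0 ℓ i * MSAux.Bwd K (W ℓ) m m i
    simp [hWdef]
  · intro j hj0 hjm
    ext ℓ i
    rw [key ℓ j i]
    have hP := Psi_eq (m - (j:ℕ)) (by omega) (by omega) ℓ i
    rw [show m - (m - (j:ℕ)) = (j:ℕ) by omega] at hP
    rw [Matrix.hadamard_apply, Matrix.hadamard_apply, hP,
      hatPsi_eq (j:ℕ) (by omega) (by omega) ℓ i,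
      Matrix.mul_diagonal, hWpos ℓ (j:ℕ) (by omega)]
    ring
  · ext ℓ i
    rw [key ℓ (Fin.last m) i]
    rw [Fin.val_last, Nat.sub_self]
    rw [Matrix.hadamard_apply, Matrix.mul_diagonal,
      hatPsi_eq m hm le_rfl ℓ i, hWpos ℓ m (by omega)]
    show MSAux.Fwd K (W ℓ) m i * (Um m ℓ i * u m i) * 1
      = Um m ℓ i * u m i * MSAux.Fwd K (W ℓ) m i
    ring
end
end

section
/- In the setting of the multi-species tensor (K̂, Û and the recursively defined matrices Ψ̂_j, Ψ_j), the single-mode (marginal) projections onto the time modes satisfy: P_𝒯(K̂ ⊙ Û) = u_𝒯 ⊙ ((Ψ̂_𝒯 ⊙ U_{−1,𝒯})^T 𝟏_L) and, for every j = 1,…,𝒯−1, P_j(K̂ ⊙ Û) = u_j ⊙ ((Ψ̂_j ⊙ Ψ_j ⊙ U_{−1,j})^T 𝟏_L), where 𝟏_L ∈ ℝ^L is the all-ones vector. -/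
open scoped BigOperators
open Filter Matrix

noncomputable section

namespace MSAux

variable {N : ℕ}

/-- Forward vector. -/
def fwdV (K : Matrix (Fin N) (Fin N) ℝ) (W : ℕ → Fin N → ℝ) : ℕ → Fin N → ℝ
  | 0 => W 0
  | j + 1 => fun i => (∑ k, fwdV K W j k * K k i) * W (j + 1) i

/-- Backward vector, indexed by gap from the top index. -/
def bwdV (K : Matrix (Fin N) (Fin N) ℝ) (W : ℕ → Fin N → ℝ) (top : ℕ) : ℕ → Fin N → ℝ
  | 0 => fun _ => 1
  | g + 1 => fun i => ∑ k, K i k * W (top - g) k * bwdV K W top g k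

lemma fwdV_congr (K : Matrix (Fin N) (Fin N) ℝ) (W₁ W₂ : ℕ → Fin N → ℝ) :
    ∀ j, (∀ t ≤ j, W₁ t = W₂ t) → fwdV K W₁ j = fwdV K W₂ j := by
  intro j
  induction j with
  | zero => intro h; simpa [fwdV] using h 0 le_rfl
  | succ j ih =>
    intro h
    have h1 : fwdV K W₁ j = fwdV K W₂ j := ih fun t ht => h t (ht.trans (Nat.le_succ j))
    funext i
    simp [fwdV, h1, h (j+1) le_rfl]

lemma sum_pi_snoc {n : ℕ} (f : (Fin (n + 1) → Fin N) → ℝ) :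
    ∑ x : Fin (n + 1) → Fin N, f x
      = ∑ y : Fin n → Fin N, ∑ k : Fin N, f (Fin.snoc y k) := by
  rw [← (Fin.snocEquiv (fun _ => Fin N)).sum_comp f]
  rw [Fintype.sum_prod_type, Finset.sum_comm]
  simp [Fin.snocEquiv]

lemma prod_W_snoc {n : ℕ} (W : ℕ → Fin N → ℝ) (y : Fin (n + 1) → Fin N) (k : Fin N) :
    ∏ t : Fin (n + 2), W t ((Fin.snoc y k : Fin (n+2) → Fin N) t)
      = (∏ t : Fin (n + 1), W t (y t)) * W (n + 1) k := by
  rw [Fin.prod_univ_castSucc]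
  simp

lemma prod_K_snoc {n : ℕ} (K : Matrix (Fin N) (Fin N) ℝ) (y : Fin (n + 1) → Fin N)
    (k : Fin N) :
    ∏ t : Fin (n + 1), K ((Fin.snoc y k : Fin (n+2) → Fin N) t.castSucc) ((Fin.snoc y k : Fin (n+2) → Fin N) t.succ)
      = (∏ t : Fin n, K (y t.castSucc) (y t.succ)) * K (y (Fin.last n)) k := by
  rw [Fin.prod_univ_castSucc]
  congr 1
  · refine Finset.prod_congr rfl fun t _ => ?_
    rw [Fin.succ_castSucc]
    simp only [Fin.snoc_castSucc]
  · rw [Fin.succ_last]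
    simp

end MSAux

namespace MSAux

variable {N : ℕ}

lemma fwdV_update_mul (K : Matrix (Fin N) (Fin N) ℝ) (W : ℕ → Fin N → ℝ) (c : Fin N → ℝ)
    (n : ℕ) :
    fwdV K (Function.update W n (fun a => W n a * c a)) n = fun i => fwdV K W n i * c i := by
  cases n with
  | zero => funext i; simp [fwdV]
  | succ n =>
    funext i
    have h : fwdV K (Function.update W (n + 1) fun a => W (n + 1) a * c a) n = fwdV K W n :=
      fwdV_congr _ _ _ n (fun t ht => Function.update_of_ne (by omega) _ _)
    simp only [fwdV, h, Function.update_self]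
    ring

lemma bwdV_update (K : Matrix (Fin N) (Fin N) ℝ) (W : ℕ → Fin N → ℝ) (n : ℕ) :
    ∀ g, 1 ≤ g → g ≤ n →
      bwdV K (Function.update W n (fun a => W n a * bwdV K W (n + 1) 1 a)) n g
        = bwdV K W (n + 1) (g + 1) := by
  intro g
  induction g with
  | zero => omega
  | succ g ih =>
    intro _ hgn
    rcases Nat.eq_zero_or_pos g with rfl | hg
    · funext i
      simp only [bwdV, Nat.sub_zero, Function.update_self]
      refine Finset.sum_congr rfl fun k _ => ?_
      have : (n + 1) - 1 = n := by omega
      rw [this]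
      ring
    · funext i
      have hne : n - g ≠ n := by omega
      have e1 : bwdV K (Function.update W n fun a => W n a * bwdV K W (n + 1) 1 a) n (g + 1) i
          = ∑ k, K i k * (Function.update W n fun a => W n a * bwdV K W (n + 1) 1 a) (n - g) k
              * bwdV K (Function.update W n fun a => W n a * bwdV K W (n + 1) 1 a) n g k := rfl
      have e2 : bwdV K W (n + 1) (g + 1 + 1) i
          = ∑ k, K i k * W ((n + 1) - (g + 1)) k * bwdV K W (n + 1) (g + 1) k := rfl
      rw [e1, e2, ih hg (by omega)]
      refine Finset.sum_congr rfl fun k _ => ?_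
      rw [Function.update_of_ne hne, show (n + 1) - (g + 1) = n - g from by omega]

lemma pathSum (K : Matrix (Fin N) (Fin N) ℝ) :
    ∀ (n : ℕ) (W : ℕ → Fin N → ℝ) (j : ℕ) (hj : j ≤ n) (i : Fin N),
    (∑ x : Fin (n + 1) → Fin N,
        if x ⟨j, Nat.lt_succ_of_le hj⟩ = i then
          (∏ t : Fin (n + 1), W t (x t)) * (∏ t : Fin n, K (x t.castSucc) (x t.succ))
        else 0)
      = fwdV K W j i * bwdV K W n (n - j) i := by
  intro n
  induction n with
  | zero =>
    intro W j hj i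
    obtain rfl : j = 0 := Nat.le_zero.mp hj
    rw [← (Equiv.funUnique (Fin 1) (Fin N)).symm.sum_comp]
    simp [fwdV, bwdV, Equiv.funUnique]
  | succ n IH =>
    intro W j hj i
    rw [sum_pi_snoc]
    rcases Nat.lt_or_ge j (n + 1) with hjn | hjn
    · have hj' : j ≤ n := Nat.lt_succ_iff.mp hjn
      set c : Fin N → ℝ := bwdV K W (n + 1) 1 with hc
      set W' : ℕ → Fin N → ℝ := Function.update W n (fun a => W n a * c a) with hW'
      have hcapp : ∀ a, c a = ∑ k, K a k * W (n + 1) k := by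
        intro a; simp [hc, bwdV]
      have key : (∑ y : Fin (n + 1) → Fin N, ∑ k : Fin N,
          if (Fin.snoc y k : Fin (n + 2) → Fin N) ⟨j, Nat.lt_succ_of_le hj⟩ = i then
            (∏ t : Fin (n + 2), W t ((Fin.snoc y k : Fin (n + 2) → Fin N) t)) *
              (∏ t : Fin (n + 1), K ((Fin.snoc y k : Fin (n + 2) → Fin N) t.castSucc)
                ((Fin.snoc y k : Fin (n + 2) → Fin N) t.succ))
          else 0)
          = ∑ y : Fin (n + 1) → Fin N,
              if y ⟨j, Nat.lt_succ_of_le hj'⟩ = i then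
                (∏ t : Fin (n + 1), W' t (y t)) * (∏ t : Fin n, K (y t.castSucc) (y t.succ))
              else 0 := by
        refine Finset.sum_congr rfl fun y _ => ?_
        have hidx : ∀ k : Fin N, (Fin.snoc y k : Fin (n + 2) → Fin N) ⟨j, Nat.lt_succ_of_le hj⟩
            = y ⟨j, Nat.lt_succ_of_le hj'⟩ := fun k => by
          have h0 : (⟨j, Nat.lt_succ_of_le hj⟩ : Fin (n + 2))
              = Fin.castSucc ⟨j, Nat.lt_succ_of_le hj'⟩ := rfl
          rw [h0, Fin.snoc_castSucc]
        simp only [hidx, prod_W_snoc, prod_K_snoc]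
        by_cases hy : y ⟨j, Nat.lt_succ_of_le hj'⟩ = i
        · simp only [hy, if_pos]
          have hWy : (∏ t : Fin (n + 1), W t (y t))
              = (∏ t : Fin n, W t (y t.castSucc)) * W n (y (Fin.last n)) := by
            rw [Fin.prod_univ_castSucc]; simp
          have hW'y : (∏ t : Fin (n + 1), W' t (y t))
              = (∏ t : Fin n, W t (y t.castSucc)) *
                  (W n (y (Fin.last n)) * c (y (Fin.last n))) := by
            rw [Fin.prod_univ_castSucc]
            congr 1
            · refine Finset.prod_congr rfl fun t _ => ?_
              have ht : (t : ℕ) ≠ n := Nat.ne_of_lt t.isLt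
              simp only [Fin.coe_castSucc]
              rw [hW', Function.update_of_ne ht]
            · simp [hW']
          rw [hWy, hW'y]
          have : (∑ k, (((∏ t : Fin n, W t (y t.castSucc)) * W n (y (Fin.last n))) *
              W (n + 1) k) * ((∏ t : Fin n, K (y t.castSucc) (y t.succ)) *
                K (y (Fin.last n)) k))
              = ((∏ t : Fin n, W t (y t.castSucc)) * W n (y (Fin.last n)) *
                  (∏ t : Fin n, K (y t.castSucc) (y t.succ))) *
                ∑ k, K (y (Fin.last n)) k * W (n + 1) k := by
            rw [Finset.mul_sum]
            exact Finset.sum_congr rfl fun k _ => by ring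
          rw [this, ← hcapp]
          ring
        · simp [hy]
      rw [key, IH W' j hj' i]
      rcases eq_or_lt_of_le hj' with heq | hlt
      · subst heq
        rw [Nat.sub_self, show j + 1 - j = 1 from by omega]
        have h1 : fwdV K W' j i = fwdV K W j i * c i := by
          rw [hW', fwdV_update_mul]
        rw [h1]
        show (fwdV K W j i * c i) * 1 = _
        rw [hc]; ring
      · have h1 : fwdV K W' j = fwdV K W j :=
          fwdV_congr _ _ _ j (fun t ht => by
            rw [hW', Function.update_of_ne (by omega)])
        have h2 : bwdV K W' n (n - j) = bwdV K W (n + 1) ((n - j) + 1) := by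
          rw [hW', hc]; exact bwdV_update K W n (n - j) (by omega) (by omega)
        rw [h1, h2, show (n - j) + 1 = (n + 1) - j from by omega]
    · obtain rfl : j = n + 1 := le_antisymm hj hjn
      have hlast : ∀ (y : Fin (n + 1) → Fin N) (k : Fin N),
          (Fin.snoc y k : Fin (n + 2) → Fin N) ⟨n + 1, Nat.lt_succ_of_le hj⟩ = k := by
        intro y k
        have h0 : (⟨n + 1, Nat.lt_succ_of_le hj⟩ : Fin (n + 2)) = Fin.last (n + 1) := rfl
        rw [h0, Fin.snoc_last]
      have step1 : (∑ y : Fin (n + 1) → Fin N, ∑ k : Fin N,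
          if (Fin.snoc y k : Fin (n + 2) → Fin N) ⟨n + 1, Nat.lt_succ_of_le hj⟩ = i then
            (∏ t : Fin (n + 2), W t ((Fin.snoc y k : Fin (n + 2) → Fin N) t)) *
              (∏ t : Fin (n + 1), K ((Fin.snoc y k : Fin (n + 2) → Fin N) t.castSucc)
                ((Fin.snoc y k : Fin (n + 2) → Fin N) t.succ))
          else 0)
          = ∑ y : Fin (n + 1) → Fin N, ∑ k' : Fin N,
              (if y ⟨n, Nat.lt_succ_of_le le_rfl⟩ = k' then
                (∏ t : Fin (n + 1), W t (y t)) * (∏ t : Fin n, K (y t.castSucc) (y t.succ))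
              else 0) * (K k' i * W (n + 1) i) := by
        refine Finset.sum_congr rfl fun y _ => ?_
        simp only [hlast, prod_W_snoc, prod_K_snoc]
        rw [Finset.sum_ite_eq' Finset.univ i
          (fun k => ((∏ t : Fin (n + 1), W t (y t)) * W (n + 1) k) *
            ((∏ t : Fin n, K (y t.castSucc) (y t.succ)) * K (y (Fin.last n)) k))]
        simp only [Finset.mem_univ, if_true, ite_mul, zero_mul]
        rw [Finset.sum_ite_eq Finset.univ (y ⟨n, Nat.lt_succ_of_le le_rfl⟩)
          (fun k' => (∏ t : Fin (n + 1), W t (y t)) *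
            (∏ t : Fin n, K (y t.castSucc) (y t.succ)) * (K k' i * W (n + 1) i))]
        have : y ⟨n, Nat.lt_succ_of_le le_rfl⟩ = y (Fin.last n) := rfl
        simp only [Finset.mem_univ, if_true, this]
        ring
      rw [step1, Finset.sum_comm]
      have step2 : ∀ k' : Fin N, (∑ y : Fin (n + 1) → Fin N,
          (if y ⟨n, Nat.lt_succ_of_le le_rfl⟩ = k' then
            (∏ t : Fin (n + 1), W t (y t)) * (∏ t : Fin n, K (y t.castSucc) (y t.succ))
          else 0) * (K k' i * W (n + 1) i))
          = fwdV K W n k' * (K k' i * W (n + 1) i) := by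
        intro k'
        rw [← Finset.sum_mul, IH W n le_rfl k', Nat.sub_self]
        show fwdV K W n k' * 1 * _ = _
        ring
      rw [Finset.sum_congr rfl fun k' _ => step2 k', Nat.sub_self]
      show _ = ((∑ k, fwdV K W n k * K k i) * W (n + 1) i) * 1
      rw [Finset.sum_mul, Finset.sum_mul]
      exact Finset.sum_congr rfl fun k _ => by ring

end MSAux


namespace MSAux

/-- The local weight function of the multi-species tensor. -/
def Wdef {L N : ℕ} (Um : ℕ → Matrix (Fin L) (Fin N) ℝ) (u : ℕ → Fin N → ℝ) (ℓ : Fin L) :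
    ℕ → Fin N → ℝ :=
  fun t => if t = 0 then Um 0 ℓ else fun a => Um t ℓ a * u t a

lemma Wdef_zero {L N : ℕ} (Um : ℕ → Matrix (Fin L) (Fin N) ℝ) (u : ℕ → Fin N → ℝ)
    (ℓ : Fin L) : Wdef Um u ℓ 0 = Um 0 ℓ := by simp [Wdef]

lemma Wdef_pos {L N : ℕ} (Um : ℕ → Matrix (Fin L) (Fin N) ℝ) (u : ℕ → Fin N → ℝ)
    (ℓ : Fin L) {t : ℕ} (h : t ≠ 0) (a : Fin N) :
    Wdef Um u ℓ t a = Um t ℓ a * u t a := by simp [Wdef, h]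

end MSAux

/-- Sinkhorn-type computation of the single-mode (time-marginal)
projections of the multi-species tensor `K̂ ⊙ Û`. -/
theorem multispecies_marginal_projections
    (L N m : ℕ) (hm : 1 ≤ m) (ε : ℝ) (hε : 0 < ε)
    (C : Matrix (Fin N) (Fin N) EReal) (hC : ∀ i k, C i k ≠ ⊥)
    (K : Matrix (Fin N) (Fin N) ℝ) (hK : ∀ i k, K i k = expNegE ε (C i k))
    (Um : ℕ → Matrix (Fin L) (Fin N) ℝ) (u : ℕ → Fin N → ℝ)
    (Khat Uhat : Fin L × (Fin (m + 1) → Fin N) → ℝ)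
    (hKhat : ∀ ℓ x, Khat (ℓ, x) = ∏ t : Fin m, K (x t.castSucc) (x t.succ))
    (hUhat : ∀ ℓ x, Uhat (ℓ, x) = Um 0 ℓ (x 0) *
      ∏ t : Fin m, (Um ((t : ℕ) + 1) ℓ (x t.succ) * u ((t : ℕ) + 1) (x t.succ)))
    (hatPsi Psi : ℕ → Matrix (Fin L) (Fin N) ℝ)
    (hhat1 : hatPsi 1 = Um 0 * K)
    (hhatrec : ∀ j : ℕ, 2 ≤ j → j ≤ m →
      hatPsi j = ((hatPsi (j - 1)).hadamard (Um (j - 1))) * Matrix.diagonal (u (j - 1)) * K)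
    (hpsiLast : Psi (m - 1) = Um m * Matrix.diagonal (u m) * Kᵀ)
    (hpsirec : ∀ j : ℕ, j + 2 ≤ m →
      Psi j = ((Psi (j + 1)).hadamard (Um (j + 1))) * Matrix.diagonal (u (j + 1)) * Kᵀ)
    :
    (msProj (Fin.last m) (fun p => Khat p * Uhat p)
        = fun i => u m i *
            ((((hatPsi m).hadamard (Um m))ᵀ.mulVec (fun _ => (1 : ℝ))) i)) ∧
    ∀ j : Fin (m + 1), 0 < (j : ℕ) → (j : ℕ) < m →
      msProj j (fun p => Khat p * Uhat p)
        = fun i => u (j : ℕ) i *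
            (((((hatPsi (j : ℕ)).hadamard (Psi (j : ℕ))).hadamard (Um (j : ℕ)))ᵀ.mulVec
              (fun _ => (1 : ℝ))) i) := by
  classical
  set Wf : Fin L → ℕ → Fin N → ℝ := MSAux.Wdef Um u with hWf
  -- the tensor entry as a product of local weights and kernel factors
  have hT : ∀ (ℓ : Fin L) (x : Fin (m + 1) → Fin N),
      Khat (ℓ, x) * Uhat (ℓ, x)
        = (∏ t : Fin (m + 1), Wf ℓ t (x t)) * (∏ t : Fin m, K (x t.castSucc) (x t.succ)) := by
    intro ℓ x
    rw [hKhat, hUhat]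
    have hprod : (∏ t : Fin (m + 1), Wf ℓ t (x t))
        = Um 0 ℓ (x 0) *
            ∏ t : Fin m, (Um ((t : ℕ) + 1) ℓ (x t.succ) * u ((t : ℕ) + 1) (x t.succ)) := by
      rw [Fin.prod_univ_succ]
      refine congrArg₂ (· * ·) (by simp [hWf, MSAux.Wdef])
        (Finset.prod_congr rfl fun t _ => ?_)
      rw [hWf, show ((t.succ : Fin (m + 1)) : ℕ) = (t : ℕ) + 1 from Fin.val_succ t,
        MSAux.Wdef_pos Um u ℓ (Nat.succ_ne_zero _)]
    rw [hprod]; ring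
  -- hatPsi in terms of the forward vectors
  have hH : ∀ j : ℕ, j + 1 ≤ m → ∀ (ℓ : Fin L) (i : Fin N),
      hatPsi (j + 1) ℓ i = ∑ k, MSAux.fwdV K (Wf ℓ) j k * K k i := by
    intro j
    induction j with
    | zero =>
      intro _ ℓ i
      rw [hhat1, Matrix.mul_apply]
      refine Finset.sum_congr rfl fun k _ => ?_
      simp [MSAux.fwdV, hWf, MSAux.Wdef]
    | succ j ih =>
      intro hjm ℓ i
      have hrec := hhatrec (j + 2) (by omega) (by omega)
      rw [show j + 2 - 1 = j + 1 from rfl] at hrec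
      rw [hrec, Matrix.mul_apply]
      refine Finset.sum_congr rfl fun k _ => ?_
      rw [Matrix.mul_diagonal, Matrix.hadamard_apply, ih (by omega) ℓ k]
      have hfw : MSAux.fwdV K (Wf ℓ) (j + 1) k
          = (∑ k', MSAux.fwdV K (Wf ℓ) j k' * K k' k) * (Um (j + 1) ℓ k * u (j + 1) k) := by
        show (∑ k', MSAux.fwdV K (Wf ℓ) j k' * K k' k) * Wf ℓ (j + 1) k = _
        rw [hWf, MSAux.Wdef_pos Um u ℓ (Nat.succ_ne_zero _)]
      rw [hfw]; ring
  -- forward vectors in terms of hatPsi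
  have hFwd : ∀ j : ℕ, 1 ≤ j → j ≤ m → ∀ (ℓ : Fin L) (i : Fin N),
      MSAux.fwdV K (Wf ℓ) j i = hatPsi j ℓ i * (Um j ℓ i * u j i) := by
    intro j h1 h2 ℓ i
    obtain ⟨j', rfl⟩ : ∃ j', j = j' + 1 := ⟨j - 1, by omega⟩
    show (∑ k, MSAux.fwdV K (Wf ℓ) j' k * K k i) * Wf ℓ (j' + 1) i = _
    rw [← hH j' h2 ℓ i, hWf, MSAux.Wdef_pos Um u ℓ (Nat.succ_ne_zero _)]
  -- backward vectors in terms of Psi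
  have hP : ∀ g : ℕ, 1 ≤ g → g ≤ m → ∀ (ℓ : Fin L) (i : Fin N),
      MSAux.bwdV K (Wf ℓ) m g i = Psi (m - g) ℓ i := by
    intro g
    induction g with
    | zero => omega
    | succ g ih =>
      intro _ hgm ℓ i
      rcases Nat.eq_zero_or_pos g with rfl | hg
      · have e1 : MSAux.bwdV K (Wf ℓ) m 1 i
            = ∑ k, K i k * Wf ℓ (m - 0) k * 1 := rfl
        rw [e1, hpsiLast, Matrix.mul_apply]
        refine Finset.sum_congr rfl fun k _ => ?_
        rw [Matrix.mul_diagonal, Matrix.transpose_apply,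
          show m - 0 = m from rfl, hWf, MSAux.Wdef_pos Um u ℓ (by omega)]
        ring
      · have e1 : MSAux.bwdV K (Wf ℓ) m (g + 1) i
            = ∑ k, K i k * Wf ℓ (m - g) k * MSAux.bwdV K (Wf ℓ) m g k := rfl
        have hrec := hpsirec (m - (g + 1)) (by omega)
        rw [show m - (g + 1) + 1 = m - g from by omega] at hrec
        rw [e1, hrec, Matrix.mul_apply]
        refine Finset.sum_congr rfl fun k _ => ?_
        rw [Matrix.mul_diagonal, Matrix.transpose_apply, Matrix.hadamard_apply,
          ih (by omega) (by omega) ℓ k, hWf, MSAux.Wdef_pos Um u ℓ (by omega)]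
        ring
  constructor
  · funext i
    show (∑ ℓ : Fin L, ∑ x : Fin (m + 1) → Fin N,
        if x (Fin.last m) = i then Khat (ℓ, x) * Uhat (ℓ, x) else 0) = _
    have hidx : (Fin.last m) = (⟨m, Nat.lt_succ_of_le le_rfl⟩ : Fin (m + 1)) := rfl
    have hin : ∀ ℓ : Fin L, (∑ x : Fin (m + 1) → Fin N,
        if x (Fin.last m) = i then Khat (ℓ, x) * Uhat (ℓ, x) else 0)
          = MSAux.fwdV K (Wf ℓ) m i := by
      intro ℓ
      have := MSAux.pathSum K m (Wf ℓ) m le_rfl i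
      rw [Nat.sub_self] at this
      have hb : MSAux.bwdV K (Wf ℓ) m 0 i = 1 := rfl
      rw [hb, mul_one] at this
      rw [← this]
      refine Finset.sum_congr rfl fun x _ => ?_
      rw [hidx, hT ℓ x]
    rw [Finset.sum_congr rfl fun ℓ _ => hin ℓ]
    have : ∀ ℓ : Fin L, MSAux.fwdV K (Wf ℓ) m i = hatPsi m ℓ i * (Um m ℓ i * u m i) :=
      fun ℓ => hFwd m hm le_rfl ℓ i
    rw [Finset.sum_congr rfl fun ℓ _ => this ℓ]
    simp only [Matrix.mulVec, dotProduct, Matrix.transpose_apply,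
      Matrix.hadamard_apply, mul_one, Finset.mul_sum]
    exact Finset.sum_congr rfl fun ℓ _ => by ring
  · intro j hj0 hjm
    funext i
    show (∑ ℓ : Fin L, ∑ x : Fin (m + 1) → Fin N,
        if x j = i then Khat (ℓ, x) * Uhat (ℓ, x) else 0) = _
    have hjle : (j : ℕ) ≤ m := le_of_lt hjm
    have hidx : j = (⟨(j : ℕ), Nat.lt_succ_of_le hjle⟩ : Fin (m + 1)) := Fin.ext rfl
    have hin : ∀ ℓ : Fin L, (∑ x : Fin (m + 1) → Fin N,
        if x j = i then Khat (ℓ, x) * Uhat (ℓ, x) else 0)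
          = MSAux.fwdV K (Wf ℓ) (j : ℕ) i * MSAux.bwdV K (Wf ℓ) m (m - (j : ℕ)) i := by
      intro ℓ
      rw [← MSAux.pathSum K m (Wf ℓ) (j : ℕ) hjle i]
      refine Finset.sum_congr rfl fun x _ => ?_
      rw [hT ℓ x]
    rw [Finset.sum_congr rfl fun ℓ _ => hin ℓ]
    have hone : ∀ ℓ : Fin L,
        MSAux.fwdV K (Wf ℓ) (j : ℕ) i * MSAux.bwdV K (Wf ℓ) m (m - (j : ℕ)) i
          = (hatPsi (j : ℕ) ℓ i * (Um (j : ℕ) ℓ i * u (j : ℕ) i)) * Psi (j : ℕ) ℓ i := by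
      intro ℓ
      rw [hFwd (j : ℕ) hj0 hjle ℓ i]
      have := hP (m - (j : ℕ)) (by omega) (by omega) ℓ i
      rw [show m - (m - (j : ℕ)) = (j : ℕ) from by omega] at this
      rw [this]
    rw [Finset.sum_congr rfl fun ℓ _ => hone ℓ]
    simp only [Matrix.mulVec, dotProduct, Matrix.transpose_apply,
      Matrix.hadamard_apply, mul_one, Finset.mul_sum]
    exact Finset.sum_congr rfl fun ℓ _ => by ring
end
end

section
/- Let β > 0 and define f : ℝ → ℝ ∪ {+∞} by f(x) = x/(β − x) for x ∈ [0, β) and f(x) = +∞ otherwise. Then the Fenchel conjugate f*(y) = sup_{x∈ℝ} (x·y − f(x)) is given by f*(y) = 0 if y ≤ 1/β, and f*(y) = y·β − 2·√(y·β) + 1 if y ≥ 1/β. -/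
open scoped BigOperators
open Filter

noncomputable section

lemma ereal_isup_eq (g : ℝ → EReal) (M : ℝ)
    (hub : ∀ x, g x ≤ (M : EReal)) (hatt : ∃ x, g x = (M : EReal)) :
    (⨆ x : ℝ, g x) = (M : EReal) := by
  refine le_antisymm (iSup_le hub) ?_
  obtain ⟨x, hx⟩ := hatt
  exact hx ▸ le_iSup g x

/-- The Fenchel conjugate of the congestion cost
`f(x) = x/(β-x) + I_{[0,β]}(x)` (with `f(β) = +∞`) is `f*(y) = 0` for `y ≤ 1/β` and
`f*(y) = yβ - 2√(yβ) + 1` for `y ≥ 1/β`. -/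
theorem congestion_cost_conjugate
    (β : ℝ) (hβ : 0 < β) (f : ℝ → EReal)
    (hf₁ : ∀ x : ℝ, 0 ≤ x → x < β → f x = ((x / (β - x) : ℝ) : EReal))
    (hf₂ : ∀ x : ℝ, ¬ (0 ≤ x ∧ x < β) → f x = ⊤) :
    (∀ y : ℝ, y ≤ 1 / β → (⨆ x : ℝ, ((x * y : ℝ) : EReal) - f x) = 0) ∧
    (∀ y : ℝ, 1 / β ≤ y →
      (⨆ x : ℝ, ((x * y : ℝ) : EReal) - f x)
        = ((y * β - 2 * Real.sqrt (y * β) + 1 : ℝ) : EReal)) := by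
  constructor
  · intro y hy
    have h0 : (0 : EReal) = ((0 : ℝ) : EReal) := by simp
    rw [h0]
    apply ereal_isup_eq
    · intro x
      by_cases h : 0 ≤ x ∧ x < β
      · rw [hf₁ x h.1 h.2, ← EReal.coe_sub, EReal.coe_le_coe_iff]
        have hbx : 0 < β - x := by linarith
        have h1 : x * y ≤ x / β := by
          rw [div_eq_mul_inv, ← one_div]
          exact mul_le_mul_of_nonneg_left hy h.1
        have h2 : x / β ≤ x / (β - x) := by
          apply div_le_div_of_nonneg_left h.1 hbx
          linarith
        linarith
      · rw [hf₂ x h]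
        calc ((x * y : ℝ) : EReal) - ⊤ = ⊥ := by
              rw [sub_eq_add_neg, EReal.neg_top, EReal.add_bot]
          _ ≤ _ := bot_le
    · refine ⟨0, ?_⟩
      rw [hf₁ 0 le_rfl hβ, ← EReal.coe_sub]
      norm_num
  · intro y hy
    set s : ℝ := Real.sqrt (y * β) with hs_def
    have hy0 : 0 < y := lt_of_lt_of_le (by positivity) hy
    have hyβ : 1 ≤ y * β := by
      have := (div_le_iff₀ hβ).mp hy
      linarith
    have hs2 : s ^ 2 = y * β := Real.sq_sqrt (by positivity)
    have hs1 : 1 ≤ s := by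
      rw [hs_def]
      exact Real.one_le_sqrt.mpr hyβ
    have hs0 : 0 < s := by linarith
    apply ereal_isup_eq
    · intro x
      by_cases h : 0 ≤ x ∧ x < β
      · rw [hf₁ x h.1 h.2, ← EReal.coe_sub, EReal.coe_le_coe_iff]
        have hbx : 0 < β - x := by linarith
        have key2 : 2 * s * (β - x) ≤ (β - x) ^ 2 * y + β := by
          nlinarith [sq_nonneg ((β - x) * y - s), hs2, hy0, hbx]
        have goal' : x * y * (β - x) - x ≤ (y * β - 2 * s + 1) * (β - x) := by
          nlinarith [key2]
        have heq : x * y - x / (β - x) = (x * y * (β - x) - x) / (β - x) := by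
          field_simp
        rw [heq]
        exact (div_le_iff₀ hbx).mpr goal'
      · rw [hf₂ x h]
        calc ((x * y : ℝ) : EReal) - ⊤ = ⊥ := by
              rw [sub_eq_add_neg, EReal.neg_top, EReal.add_bot]
          _ ≤ _ := bot_le
    · refine ⟨β - s / y, ?_⟩
      have ht0 : 0 < s / y := div_pos hs0 hy0
      have htβ : s / y ≤ β := by
        rw [div_le_iff₀ hy0]
        nlinarith [hs2, hs1]
      have hx0 : 0 ≤ β - s / y := by linarith
      have hxβ : β - s / y < β := by linarith
      rw [hf₁ _ hx0 hxβ, ← EReal.coe_sub, EReal.coe_eq_coe_iff]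
      have hby : β - (β - s / y) = s / y := by ring
      rw [hby]
      have hsne : s ≠ 0 := ne_of_gt hs0
      have hyne : y ≠ 0 := ne_of_gt hy0
      field_simp
      nlinarith [hs2]
end
end
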